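/- arXiv:1004.2223 — 5 statements merged into one kernel-verified Lean document; each statement's English description precedes it below -/
import Mathlib

section
/- With $D$ the Demazure-type operator $D(f) = (f - {}^s f)/(1 - X_1 X_2^{-1})$ on the Laurent polynomial ring $A[X_1^{\pm1},X_2^{\pm1}]$: if $p$ is an $m$-restricted polynomial (i.e. all monomials $X_1^i X_2^j$ appearing in $p$ satisfy $0 \le i, j \le m-1$), then $D(p)$ is also $m$-restricted. -/
noncomputable section

/-- The Laurent polynomial ring `A[X₁^{±1}, X₂^{±1}]`. -/
abbrev Lau (A : Type) [CommRing A] : Type := AddMonoidAlgebra A (ℤ × ℤ)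

variable (A : Type) [CommRing A]

/-- The monomial `X₁^i X₂^j`. -/
def Xm (i j : ℤ) : Lau A := AddMonoidAlgebra.single (i, j) 1

/-- The automorphism `s` interchanging `X₁` and `X₂`. -/
def sw (p : Lau A) : Lau A := AddMonoidAlgebra.ofCoeff (Finsupp.equivMapDomain (Equiv.prodComm ℤ ℤ) p.coeff)

/-- `p` is `m`-restricted: all monomials `X₁^i X₂^j` occurring in `p`
satisfy `0 ≤ i, j ≤ m-1`. -/
def Res (m : ℕ) (p : Lau A) : Prop :=
  ∀ ab ∈ p.coeff.support, 0 ≤ ab.1 ∧ ab.1 ≤ (m : ℤ) - 1 ∧ 0 ≤ ab.2 ∧ ab.2 ≤ (m : ℤ) - 1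

/- STATEMENT 1: D preserves m-restricted polynomials. -/
theorem stmt1 (m : ℕ) (p Dp : Lau A) (hp : Res A m p)
    (hD : Dp * (1 - Xm A 1 0 * Xm A 0 (-1)) = p - sw A p) :
    Res A m Dp := by
  -- p vanishes outside the box
  have hp0 : ∀ i j : ℤ, (i < 0 ∨ (m : ℤ) - 1 < i ∨ j < 0 ∨ (m : ℤ) - 1 < j) →
      p.coeff (i, j) = 0 := by
    intro i j h
    by_contra hne
    obtain ⟨h1, h2, h3, h4⟩ := hp (i, j) (Finsupp.mem_support_iff.2 hne)
    simp only at h1 h2 h3 h4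
    omega
  -- the product of the two monomials
  have hsingle : Xm A 1 0 * Xm A 0 (-1) =
      AddMonoidAlgebra.single ((1 : ℤ), (-1 : ℤ)) (1 : A) := by
    rw [Xm, Xm, AddMonoidAlgebra.single_mul_single]
    norm_num
  -- the coefficient recurrence
  have key : ∀ i j : ℤ, Dp.coeff (i, j) - Dp.coeff (i - 1, j + 1) = p.coeff (i, j) - p.coeff (j, i) := by
    intro i j
    have h : (Dp * (1 - Xm A 1 0 * Xm A 0 (-1))).coeff (i, j) = (p - sw A p).coeff (i, j) := by
      rw [hD]
    rw [hsingle, mul_sub, mul_one, AddMonoidAlgebra.coeff_sub, AddMonoidAlgebra.coeff_sub, Finsupp.sub_apply, Finsupp.sub_apply,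
      AddMonoidAlgebra.coeff_mul_single_apply] at h
    have h2 : ((i, j) : ℤ × ℤ) + -(1, -1) = (i - 1, j + 1) := by
      simp [Prod.ext_iff, sub_eq_add_neg]
    rw [h2, mul_one] at h
    have h3 : (sw A p).coeff (i, j) = p.coeff (j, i) := by
      simp [sw]
    rw [h3] at h
    exact h
  -- telescoping (down-left direction)
  have tele1 : ∀ (i j : ℤ) (n : ℕ), Dp.coeff (i, j) = Dp.coeff (i - n, j + n) +
      ∑ t ∈ Finset.range n, (p.coeff (i - t, j + t) - p.coeff (j + t, i - t)) := by
    intro i j n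
    induction n with
    | zero => simp
    | succ n ih =>
      rw [Finset.sum_range_succ, ih]
      have hk := key (i - n) (j + n)
      have e1 : i - (n + 1 : ℕ) = i - n - 1 := by push_cast; ring
      have e2 : j + (n + 1 : ℕ) = j + n + 1 := by push_cast; ring
      rw [e1, e2]
      linear_combination hk
  -- telescoping (up-right direction)
  have tele2 : ∀ (i j : ℤ) (n : ℕ), Dp.coeff (i, j) = Dp.coeff (i + n, j - n) -
      ∑ t ∈ Finset.range n, (p.coeff (i + t + 1, j - t - 1) - p.coeff (j - t - 1, i + t + 1)) := by
    intro i j n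
    induction n with
    | zero => simp
    | succ n ih =>
      rw [Finset.sum_range_succ, ih]
      have hk := key (i + n + 1) (j - n - 1)
      have e1 : i + (n + 1 : ℕ) = i + n + 1 := by push_cast; ring
      have e2 : j - (n + 1 : ℕ) = j - n - 1 := by push_cast; ring
      rw [e1, e2]
      have : Dp.coeff (i + n + 1 - 1, j - n - 1 + 1) = Dp.coeff (i + n, j - n) := by ring_nf
      rw [this] at hk
      linear_combination -hk
  -- we can walk off the (finite) support in either direction
  have hz1 : ∀ i j : ℤ, ∃ n : ℕ, Dp.coeff (i - n, j + n) = 0 := by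
    intro i j
    by_contra h
    push_neg at h
    have hinj : Function.Injective (fun n : ℕ => ((i - n, j + n) : ℤ × ℤ)) := by
      intro a b hab
      simp only [Prod.mk.injEq] at hab
      omega
    have := Set.infinite_of_injective_forall_mem (s := (Dp.coeff.support : Set (ℤ × ℤ))) hinj
      (fun n => by simpa using Finsupp.mem_support_iff.2 (h n))
    exact this Dp.coeff.support.finite_toSet
  have hz2 : ∀ i j : ℤ, ∃ n : ℕ, Dp.coeff (i + n, j - n) = 0 := by
    intro i j
    by_contra h
    push_neg at h
    have hinj : Function.Injective (fun n : ℕ => ((i + n, j - n) : ℤ × ℤ)) := by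
      intro a b hab
      simp only [Prod.mk.injEq] at hab
      omega
    have := Set.infinite_of_injective_forall_mem (s := (Dp.coeff.support : Set (ℤ × ℤ))) hinj
      (fun n => by simpa using Finsupp.mem_support_iff.2 (h n))
    exact this Dp.coeff.support.finite_toSet
  -- main vanishing statement
  have main : ∀ i j : ℤ, (i < 0 ∨ (m : ℤ) - 1 < i ∨ j < 0 ∨ (m : ℤ) - 1 < j) →
      Dp.coeff (i, j) = 0 := by
    intro i j h
    rcases h with h | h | h | h
    · obtain ⟨n, hn⟩ := hz1 i j
      rw [tele1 i j n, hn, zero_add]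
      apply Finset.sum_eq_zero
      intro t _
      have ht0 : (0 : ℤ) ≤ (t : ℤ) := Int.natCast_nonneg t
      rw [hp0 _ _ (by omega), hp0 _ _ (by omega), sub_zero]
    · obtain ⟨n, hn⟩ := hz2 i j
      rw [tele2 i j n, hn, zero_sub, neg_eq_zero]
      apply Finset.sum_eq_zero
      intro t _
      have ht0 : (0 : ℤ) ≤ (t : ℤ) := Int.natCast_nonneg t
      rw [hp0 _ _ (by omega), hp0 _ _ (by omega), sub_zero]
    · obtain ⟨n, hn⟩ := hz2 i j
      rw [tele2 i j n, hn, zero_sub, neg_eq_zero]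
      apply Finset.sum_eq_zero
      intro t _
      have ht0 : (0 : ℤ) ≤ (t : ℤ) := Int.natCast_nonneg t
      rw [hp0 _ _ (by omega), hp0 _ _ (by omega), sub_zero]
    · obtain ⟨n, hn⟩ := hz1 i j
      rw [tele1 i j n, hn, zero_add]
      apply Finset.sum_eq_zero
      intro t _
      have ht0 : (0 : ℤ) ≤ (t : ℤ) := Int.natCast_nonneg t
      rw [hp0 _ _ (by omega), hp0 _ _ (by omega), sub_zero]
  -- conclude
  rintro ⟨i, j⟩ hab
  have hne : Dp.coeff (i, j) ≠ 0 := Finsupp.mem_support_iff.1 hab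
  refine ⟨?_, ?_, ?_, ?_⟩ <;> simp only <;> by_contra h' <;>
    exact hne (main i j (by omega))
end
end

section
/- Define $D(f) = (f - {}^s f)/(1 - X_1 X_2^{-1})$ and $D_s(f) = (f - {}^s f)/(1 - X_1^{-1} X_2)$ on the Laurent polynomial ring over an integral domain. For an $m$-restricted polynomial $p$, one has $D(p) = D_s(p)$ if and only if $p = {}^s p$ (i.e. $p$ is symmetric). -/
noncomputable section

variable (A : Type) [CommRing A]

/- STATEMENT 2: for an m-restricted polynomial p over an integral domain,
D(p) = D_s(p) iff p is symmetric. -/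
theorem stmt2 [IsDomain A] (m : ℕ) (p Dp Dsp : Lau A) (hp : Res A m p)
    (hD : Dp * (1 - Xm A 1 0 * Xm A 0 (-1)) = p - sw A p)
    (hDs : Dsp * (1 - Xm A (-1) 0 * Xm A 0 1) = p - sw A p) :
    Dp = Dsp ↔ sw A p = p := by
  have h1 : Xm A 1 0 * Xm A 0 (-1) = AddMonoidAlgebra.single ((1:ℤ), (-1:ℤ)) (1:A) := by
    simp [Xm, AddMonoidAlgebra.single_mul_single]
  have h2 : Xm A (-1) 0 * Xm A 0 1 = AddMonoidAlgebra.single ((-1:ℤ), (1:ℤ)) (1:A) := by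
    simp [Xm, AddMonoidAlgebra.single_mul_single]
  rw [h1] at hD
  rw [h2] at hDs
  constructor
  · intro h
    subst h
    have key : Dp * (AddMonoidAlgebra.single ((-1:ℤ), (1:ℤ)) (1:A)
        - AddMonoidAlgebra.single ((1:ℤ), (-1:ℤ)) (1:A)) = 0 := by
      linear_combination hD - hDs
    have hne : (AddMonoidAlgebra.single ((-1:ℤ), (1:ℤ)) (1:A)
        - AddMonoidAlgebra.single ((1:ℤ), (-1:ℤ)) (1:A)) ≠ 0 := by
      intro h
      rw [sub_eq_zero] at h
      have h2 := congrArg (fun f : Lau A => f.coeff ((-1:ℤ), (1:ℤ))) h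
      simp only [AddMonoidAlgebra.coeff_single, Finsupp.single_eq_same, Finsupp.single_eq_of_ne' (by decide : ((1:ℤ),(-1:ℤ)) ≠ ((-1:ℤ),(1:ℤ)))] at h2
      exact one_ne_zero h2
    have hDp0 : Dp = 0 := by
      rcases mul_eq_zero.mp key with h0 | h0
      · exact h0
      · exact absurd h0 hne
    rw [hDp0, zero_mul] at hD
    exact (sub_eq_zero.mp hD.symm).symm
  · intro h
    rw [h, sub_self] at hD hDs
    have hne1 : (1 - AddMonoidAlgebra.single ((1:ℤ), (-1:ℤ)) (1:A)) ≠ 0 := by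
      intro h
      rw [sub_eq_zero, AddMonoidAlgebra.one_def] at h
      have h3 := congrArg (fun f : Lau A => f.coeff (0 : ℤ × ℤ)) h
      simp only [AddMonoidAlgebra.coeff_single, Finsupp.single_eq_same, Finsupp.single_eq_of_ne' (by decide : ((1:ℤ),(-1:ℤ)) ≠ (0 : ℤ × ℤ))] at h3
      exact one_ne_zero h3
    have hne2 : (1 - AddMonoidAlgebra.single ((-1:ℤ), (1:ℤ)) (1:A)) ≠ 0 := by
      intro h
      rw [sub_eq_zero, AddMonoidAlgebra.one_def] at h
      have h3 := congrArg (fun f : Lau A => f.coeff (0 : ℤ × ℤ)) h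
      simp only [AddMonoidAlgebra.coeff_single, Finsupp.single_eq_same, Finsupp.single_eq_of_ne' (by decide : ((-1:ℤ),(1:ℤ)) ≠ (0 : ℤ × ℤ))] at h3
      exact one_ne_zero h3
    have hDp0 : Dp = 0 := by
      rcases mul_eq_zero.mp hD with h0 | h0
      · exact h0
      · exact absurd h0 hne1
    have hDsp0 : Dsp = 0 := by
      rcases mul_eq_zero.mp hDs with h0 | h0
      · exact h0
      · exact absurd h0 hne2
    rw [hDp0, hDsp0]
end
end

section
/- If $p$ is a nonzero $m$-restricted Laurent polynomial in $X_1, X_2$ over an integral domain with $D(p) \neq 0$, where $D(f) = (f - {}^s f)/(1 - X_1 X_2^{-1})$, then the largest power of $X_2$ occurring in $D(p)$ is strictly greater than the largest power of $X_1$ occurring in $D(p)$. -/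
noncomputable section

variable (A : Type) [CommRing A]

lemma sw_eq_domCongr (q : Lau A) :
    sw A q = AddMonoidAlgebra.domCongr A A (AddEquiv.prodComm (M := ℤ) (N := ℤ)) q := by
  ext ab
  simp [sw, AddMonoidAlgebra.coeff_domCongr, Finsupp.equivMapDomain_apply, AddMonoidAlgebra.coeff_ofCoeff]

lemma sw_mul (q r : Lau A) : sw A (q * r) = sw A q * sw A r := by
  simp only [sw_eq_domCongr, map_mul]

lemma sw_sub (q r : Lau A) : sw A (q - r) = sw A q - sw A r := by
  simp only [sw_eq_domCongr, map_sub]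

lemma sw_one : sw A (1 : Lau A) = 1 := by
  simp only [sw_eq_domCongr, map_one]

lemma sw_sw (q : Lau A) : sw A (sw A q) = q := by
  ext ab; simp [sw, Finsupp.equivMapDomain_apply, AddMonoidAlgebra.coeff_ofCoeff]

lemma sw_Xm (i j : ℤ) : sw A (Xm A i j) = Xm A j i := by
  rw [sw_eq_domCongr]
  simp only [Xm, AddMonoidAlgebra.domCongr_single]
  rfl

lemma Xm_mul (i j k l : ℤ) : Xm A i j * Xm A k l = Xm A (i + k) (j + l) := by
  simp [Xm, AddMonoidAlgebra.single_mul_single, Prod.mk_add_mk]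

lemma Xm_zero : Xm A 0 0 = 1 := rfl

/- STATEMENT 3: if p is m-restricted and D(p) ≠ 0, the largest power of X₂
occurring in D(p) strictly exceeds the largest power of X₁ occurring in D(p). -/
theorem stmt3 [IsDomain A] (m : ℕ) (p Dp : Lau A) (hp : Res A m p) (hp0 : p ≠ 0)
    (hD : Dp * (1 - Xm A 1 0 * Xm A 0 (-1)) = p - sw A p) (hDp : Dp ≠ 0) :
    Dp.coeff.support.sup (fun ab => (ab.1 : WithBot ℤ)) <
      Dp.coeff.support.sup (fun ab => (ab.2 : WithBot ℤ)) := by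
  classical
  rw [Xm_mul] at hD
  norm_num at hD
  -- apply sw to hD
  have h1 : sw A Dp * (1 - Xm A (-1) 1) = sw A p - p := by
    have := congrArg (sw A) hD
    rw [sw_mul, sw_sub, sw_sub, sw_one, sw_Xm, sw_sw] at this
    exact this
  -- key cancellation
  have hfac : (1 : Lau A) - Xm A (-1) 1 = Xm A (-1) 1 * (Xm A 1 (-1) - 1) := by
    rw [mul_sub, Xm_mul, mul_one]
    norm_num [Xm_zero]
  have hzero : (Dp - Xm A (-1) 1 * sw A Dp) * (1 - Xm A 1 (-1)) = 0 := by
    have : Dp * (1 - Xm A 1 (-1)) + sw A Dp * (1 - Xm A (-1) 1) = 0 := by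
      rw [hD, h1]; abel
    rw [hfac] at this
    ring_nf at this ⊢
    linear_combination this
  have hne1 : (1 : Lau A) - Xm A 1 (-1) ≠ 0 := by
    intro h
    have h0 : ((1 : Lau A) - Xm A 1 (-1)).coeff 0 = (1 : A) := by
      rw [show (1 : Lau A) = AddMonoidAlgebra.single (0 : ℤ × ℤ) (1 : A) from rfl]
      rw [show Xm A 1 (-1) = AddMonoidAlgebra.single ((1 : ℤ), (-1 : ℤ)) (1 : A) from rfl]
      rw [AddMonoidAlgebra.coeff_sub, AddMonoidAlgebra.coeff_single, AddMonoidAlgebra.coeff_single,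
        Finsupp.sub_apply, Finsupp.single_eq_same,
        Finsupp.single_eq_of_ne (by decide : (0 : ℤ × ℤ) ≠ ((1 : ℤ), (-1 : ℤ))), sub_zero]
    rw [h] at h0
    rw [AddMonoidAlgebra.coeff_zero, Finsupp.zero_apply] at h0
    exact zero_ne_one h0
  have hkey : Dp = Xm A (-1) 1 * sw A Dp := by
    rcases mul_eq_zero.mp hzero with h | h
    · exact sub_eq_zero.mp h
    · exact absurd h hne1
  -- coefficient relation
  have hco : ∀ i j : ℤ, Dp.coeff (i, j) = Dp.coeff (j - 1, i + 1) := by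
    intro i j
    conv_lhs => rw [hkey]
    rw [show Xm A (-1) 1 = AddMonoidAlgebra.single ((-1 : ℤ), (1 : ℤ)) (1 : A) from rfl]
    rw [AddMonoidAlgebra.coeff_single_mul_apply]
    rw [one_mul]
    have harg : -((-1 : ℤ), (1 : ℤ)) + (i, j) = (i + 1, j - 1) := by
      simp [Prod.ext_iff]; constructor <;> ring
    rw [harg]
    simp [sw, Finsupp.equivMapDomain_apply, AddMonoidAlgebra.coeff_ofCoeff]
  have hmem : ∀ i j : ℤ, (i, j) ∈ Dp.coeff.support → (j - 1, i + 1) ∈ Dp.coeff.support := by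
    intro i j h
    rw [Finsupp.mem_support_iff] at h ⊢
    rwa [← hco]
  have hnsupp : Dp.coeff.support.Nonempty := Finsupp.support_nonempty_iff.mpr (by simpa using hDp)
  obtain ⟨ab, hab, hA⟩ := Finset.exists_mem_eq_sup' hnsupp (fun ab => ab.1)
  have h2 : (ab.2 - 1, ab.1 + 1) ∈ Dp.coeff.support := hmem ab.1 ab.2 (by simpa using hab)
  have hb : ab.1 + 1 ≤ Dp.coeff.support.sup' hnsupp (fun ab => ab.2) :=
    Finset.le_sup' (f := fun ab => ab.2) h2
  have e1 : Dp.coeff.support.sup (fun ab => (ab.1 : WithBot ℤ)) =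
      ((Dp.coeff.support.sup' hnsupp fun ab => ab.1 : ℤ) : WithBot ℤ) :=
    (Finset.coe_sup' hnsupp _).symm
  have e2 : Dp.coeff.support.sup (fun ab => (ab.2 : WithBot ℤ)) =
      ((Dp.coeff.support.sup' hnsupp fun ab => ab.2 : ℤ) : WithBot ℤ) :=
    (Finset.coe_sup' hnsupp _).symm
  rw [e1, e2]
  exact_mod_cast (by omega : Dp.coeff.support.sup' hnsupp (fun ab => ab.1) <
    Dp.coeff.support.sup' hnsupp (fun ab => ab.2))
end
end

section
/- Let $S_m^W$ be the $A$-module of symmetric $m$-restricted polynomials in $X_1, X_2$, with basis the monomial symmetric functions $m_{ij} = X_1^i X_2^j + X_1^j X_2^i$ for $0 \le i < j \le m-1$ and $m_{ii} = X_1^i X_2^i$. Then the $A$-submodule $M = \{g \in S_m^W : X_1 g \in S_m^W\}$ (where $X_1 g$ is taken modulo the relation that $X_1^m$ is replaced using the cyclotomic relation; equivalently, $M = \ker \phi$ where $\phi(g) = d(X_1 g)$ with $d$ the antisymmetrization projector and multiplication truncated to $S_m$) is a free $A$-module of rank $m$. -/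
noncomputable section

/-- The ring `A = ℤ[q^{±1}, v₁^{±1}, …, v_m^{±1}]`, realized as the group
algebra of `ℤ × ℤ^m` over `ℤ`. -/
abbrev Av (m : ℕ) : Type := AddMonoidAlgebra ℤ (ℤ × (Fin m → ℤ))

/-- The element `q`. -/
def qv (m : ℕ) : Av m := AddMonoidAlgebra.single (1, 0) 1

/-- The element `vᵢ`. -/
def vv (m : ℕ) (i : Fin m) : Av m := AddMonoidAlgebra.single (0, Pi.single i 1) 1

/-- The `j`-th elementary symmetric polynomial of `v₁, …, v_m`. -/
def ev (m : ℕ) (j : ℕ) : Av m :=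
  ∑ s ∈ Finset.powersetCard j (Finset.univ : Finset (Fin m)), ∏ i ∈ s, vv m i

variable (A : Type) [CommRing A]

/-- Constants. -/
def CC (a : A) : Lau A := algebraMap A (Lau A) a

/-- `f_v(X₁) = ∏ᵢ (X₁ - vᵢ)`. -/
def fv1 (m : ℕ) : Lau (Av m) := ∏ i : Fin m, (Xm (Av m) 1 0 - CC (Av m) (vv m i))

/-- `f_v(X₂) = ∏ᵢ (X₂ - vᵢ)`. -/
def fv2 (m : ℕ) : Lau (Av m) := ∏ i : Fin m, (Xm (Av m) 0 1 - CC (Av m) (vv m i))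

/-- The complete homogeneous symmetric polynomial `H_k` in `X₁, X₂`. -/
def Hc (k : ℕ) : Lau A := ∑ i ∈ Finset.range (k + 1), Xm A (i : ℤ) ((k : ℤ) - (i : ℤ))

/-- The element `z = (-1)^{m+1} e_m + X₁X₂ ∑_{j=0}^{m-2} (-1)^j e_j H_{m-2-j}`. -/
def zel (m : ℕ) : Lau (Av m) :=
  CC (Av m) ((-1 : Av m) ^ (m + 1) * ev m m) +
    Xm (Av m) 1 1 *
      ∑ j ∈ Finset.range (m - 1), CC (Av m) ((-1 : Av m) ^ j * ev m j) * Hc (Av m) (m - 2 - j)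

/-- The quotient `R_m` of the Laurent polynomial ring by `(f_v(X₁), f_v(X₂))`,
free with basis the restricted monomials. -/
abbrev Rmq (m : ℕ) : Type := Lau (Av m) ⧸ Ideal.span {fv1 m, fv2 m}

/-- The quotient map. -/
def pr (m : ℕ) : Lau (Av m) →+* Rmq m := Ideal.Quotient.mk _

/-- Membership in `R_m^W`: being the image of a symmetric Laurent polynomial. -/
def symW (m : ℕ) (x : Rmq m) : Prop := ∃ g : Lau (Av m), sw (Av m) g = g ∧ pr m g = x

/-- The monomial symmetric functions `m_{ij}`. -/
def msf (i j : ℤ) : Lau A := if i = j then Xm A i i else Xm A i j + Xm A j i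

/- STATEMENT 5: the module M = {g ∈ R_m^W : X₁ g ∈ R_m^W} is a free A-module
of rank m. -/
namespace St5

open Finset AddMonoidAlgebra

variable {A}

lemma Xm_mul (a b c d : ℤ) : Xm A a b * Xm A c d = Xm A (a+c) (b+d) := by
  simp [Xm, AddMonoidAlgebra.single_mul_single]

lemma CC_single (a : A) : CC A a = AddMonoidAlgebra.single (0,0) a := by
  simp [CC, AddMonoidAlgebra.coe_algebraMap]
  rfl

lemma Xm_zero : Xm A 0 0 = 1 := rfl

/-- sw as an algebra equivalence -/
def swE : Lau A ≃ₐ[A] Lau A := AddMonoidAlgebra.domCongr A A (AddEquiv.prodComm (M := ℤ) (N := ℤ))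

lemma sw_eq (p : Lau A) : sw A p = swE p := by
  ext x
  simp [sw, swE, AddMonoidAlgebra.coeff_domCongr, Finsupp.equivMapDomain]

lemma sw_single (a b : ℤ) (c : A) :
    sw A (AddMonoidAlgebra.single (a,b) c) = AddMonoidAlgebra.single (b,a) c := by
  rw [sw_eq]
  exact AddMonoidAlgebra.domCongr_single _ _ _

lemma sw_Xm (a b : ℤ) : sw A (Xm A a b) = Xm A b a := sw_single a b 1

lemma sw_mul (p q : Lau A) : sw A (p * q) = sw A p * sw A q := by
  simp [sw_eq, map_mul]

lemma sw_add (p q : Lau A) : sw A (p + q) = sw A p + sw A q := by simp [sw_eq, map_add]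
lemma sw_sub (p q : Lau A) : sw A (p - q) = sw A p - sw A q := by simp [sw_eq, map_sub]
lemma sw_CC (a : A) : sw A (CC A a) = CC A a := by
  rw [CC_single, sw_single]

end St5

namespace St5
open Finset AddMonoidAlgebra
variable {A : Type} [CommRing A]

def sN (A : Type) [CommRing A] (n : ℕ) : Lau A :=
  ∑ i ∈ Finset.range n, Xm A (i:ℤ) ((n:ℤ)-1-(i:ℤ))

lemma tel_sN (n : ℕ) : (Xm A 1 0 - Xm A 0 1) * sN A n = Xm A (n:ℤ) 0 - Xm A 0 (n:ℤ) := by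
  have h : (Xm A 1 0 - Xm A 0 1) * sN A n =
      ∑ i ∈ Finset.range n, ((fun k : ℕ => Xm A (k:ℤ) ((n:ℤ)-(k:ℤ))) (i+1)
        - (fun k : ℕ => Xm A (k:ℤ) ((n:ℤ)-(k:ℤ))) i) := by
    rw [sN, Finset.mul_sum]
    refine Finset.sum_congr rfl fun i _ => ?_
    simp only [sub_mul, Xm_mul]
    push_cast
    ring_nf
  rw [h, Finset.sum_range_sub (fun k : ℕ => Xm A (k:ℤ) ((n:ℤ)-(k:ℤ))) n]
  simp

lemma sw_sN (n : ℕ) : sw A (sN A n) = sN A n := by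
  have : sw A (sN A n) = ∑ i ∈ Finset.range n, Xm A ((n:ℤ)-1-(i:ℤ)) (i:ℤ) := by
    rw [sN, sw_eq, map_sum]
    refine Finset.sum_congr rfl fun i _ => ?_
    rw [← sw_eq, sw_Xm]
  rw [this, sN, ← Finset.sum_range_reflect]
  refine Finset.sum_congr rfl fun i hi => ?_
  simp only [Finset.mem_range] at hi
  have h1 : ((n - 1 - i : ℕ) : ℤ) = (n:ℤ) - 1 - (i:ℤ) := by omega
  rw [h1]
  congr 1
  omega

lemma dvd_xy (b : ℤ) : ∃ s : Lau A, Xm A b 0 - Xm A 0 b = (Xm A 1 0 - Xm A 0 1) * s := by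
  rcases le_or_gt 0 b with hb | hb
  · obtain ⟨n, rfl⟩ := Int.eq_ofNat_of_zero_le hb
    exact ⟨sN A n, (tel_sN n).symm⟩
  · obtain ⟨n, rfl⟩ : ∃ n : ℕ, b = -(n:ℤ) := ⟨b.natAbs, by omega⟩
    refine ⟨-(Xm A (-(n:ℤ)) (-(n:ℤ)) * sN A n), ?_⟩
    have := tel_sN (A := A) n
    have h2 : Xm A (-(n:ℤ)) 0 - Xm A 0 (-(n:ℤ))
        = -(Xm A (-(n:ℤ)) (-(n:ℤ)) * (Xm A (n:ℤ) 0 - Xm A 0 (n:ℤ))) := by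
      rw [mul_sub, Xm_mul, Xm_mul]
      ring_nf
    rw [h2, ← this]
    ring

def addf : (ℤ×ℤ) →+ (ℤ×ℤ) where
  toFun p := (p.1 + p.2, 0)
  map_zero' := rfl
  map_add' p q := by simp [Prod.ext_iff]; ring

def piH (A : Type) [CommRing A] : Lau A →+* Lau A := AddMonoidAlgebra.mapDomainRingHom A addf

lemma piH_single (a b : ℤ) (c : A) :
    piH A (AddMonoidAlgebra.single (a,b) c) = AddMonoidAlgebra.single (a+b,0) c := by
  simp [piH, AddMonoidAlgebra.mapDomainRingHom, Finsupp.mapDomain_single, addf]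

lemma piH_Xm (a b : ℤ) : piH A (Xm A a b) = Xm A (a+b) 0 := piH_single a b 1

lemma piH_CC (c : A) : piH A (CC A c) = CC A c := by
  rw [CC_single, piH_single]
  norm_num

lemma piH_sub_dvd (q : Lau A) : ∃ r, q - piH A q = (Xm A 1 0 - Xm A 0 1) * r := by
  induction q using AddMonoidAlgebra.induction_on with
  | of g =>
    obtain ⟨a1, a2⟩ := g
    obtain ⟨s, hs⟩ := dvd_xy (A := A) a2
    refine ⟨-(Xm A a1 0 * s), ?_⟩
    have hof : (AddMonoidAlgebra.of A (ℤ×ℤ) (Multiplicative.ofAdd (a1,a2)) : Lau A)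
        = Xm A a1 a2 := rfl
    rw [hof, piH_Xm]
    have : Xm A a1 a2 - Xm A (a1+a2) 0 = -(Xm A a1 0 * ((Xm A 1 0 - Xm A 0 1) * s)) := by
      rw [← hs, mul_sub, Xm_mul, Xm_mul]
      ring_nf
    rw [this]
    ring
  | add f g hf hg =>
    obtain ⟨r1, h1⟩ := hf
    obtain ⟨r2, h2⟩ := hg
    exact ⟨r1 + r2, by rw [map_add, mul_add, ← h1, ← h2]; ring⟩
  | smul c f hf =>
    obtain ⟨r, h⟩ := hf
    refine ⟨c • r, ?_⟩
    have hpi : piH A (c • f) = c • piH A f := by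
      simp only [piH, AddMonoidAlgebra.mapDomainRingHom_apply]
      ext; simp [AddMonoidAlgebra.mapDomain, Finsupp.mapDomain_smul]
    rw [hpi, ← smul_sub, h, mul_smul_comm]

end St5

namespace St5
open Finset AddMonoidAlgebra
variable {A : Type} [CommRing A]

lemma smul_Xm (c : A) (a b : ℤ) : c • Xm A a b = AddMonoidAlgebra.single (a,b) c := by
  simp [Xm, Finsupp.smul_single']

lemma CC_mul_Xm (c : A) (a b : ℤ) : CC A c * Xm A a b = c • Xm A a b := by
  rw [CC_single, smul_Xm, Xm]
  rw [AddMonoidAlgebra.single_mul_single]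
  norm_num

/-- A group-like element as a unit of the group algebra. -/
def uS {R : Type*} [CommRing R] {G : Type*} [AddCommGroup G] (g : G) :
    (AddMonoidAlgebra R G)ˣ where
  val := AddMonoidAlgebra.single g 1
  inv := AddMonoidAlgebra.single (-g) 1
  val_inv := by rw [AddMonoidAlgebra.single_mul_single]; simp [AddMonoidAlgebra.one_def]
  inv_val := by rw [AddMonoidAlgebra.single_mul_single]; simp [AddMonoidAlgebra.one_def]

/-- Monoid hom for evaluation. -/
def mh (u w : Aˣ) : Multiplicative (ℤ×ℤ) →* A where
  toFun p := ((u ^ (Multiplicative.toAdd p).1 * w ^ (Multiplicative.toAdd p).2 : Aˣ) : A)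
  map_one' := by simp
  map_mul' p q := by
    have h1 : (Multiplicative.toAdd (p * q)).1 = (Multiplicative.toAdd p).1 + (Multiplicative.toAdd q).1 := rfl
    have h2 : (Multiplicative.toAdd (p * q)).2 = (Multiplicative.toAdd p).2 + (Multiplicative.toAdd q).2 := rfl
    rw [h1, h2, zpow_add, zpow_add]
    push_cast
    ring

/-- Evaluation algebra hom. -/
def evh (u w : Aˣ) : Lau A →ₐ[A] A := AddMonoidAlgebra.lift A A (ℤ×ℤ) (mh u w)

lemma evh_Xm (u w : Aˣ) (a b : ℤ) : evh u w (Xm A a b) = ((u^a : Aˣ) : A) * ((w^b : Aˣ) : A) := by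
  rw [evh, Xm, AddMonoidAlgebra.lift_single]
  simp [mh]

lemma evh_CC (u w : Aˣ) (c : A) : evh u w (CC A c) = c := by
  simp [CC, evh]

lemma evh_single (u w : Aˣ) (a b : ℤ) (c : A) :
    evh u w (AddMonoidAlgebra.single (a,b) c) = c * (((u^a : Aˣ) : A) * ((w^b : Aˣ) : A)) := by
  rw [← smul_Xm, map_smul, evh_Xm, smul_eq_mul]

/-- Expansion of a product of linear factors. -/
lemma exp_prod (n : ℕ) (c : ℕ → A) :
    ∃ a : ℕ → A, a n = 1 ∧ (∀ k, n < k → a k = 0) ∧ a 0 = ∏ j ∈ Finset.range n, (-(c j)) ∧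
      ∏ j ∈ Finset.range n, (Xm A 1 0 - CC A (c j))
        = ∑ k ∈ Finset.range (n+1), a k • Xm A (k:ℤ) 0 := by
  induction n with
  | zero =>
    refine ⟨fun k => if k = 0 then 1 else 0, rfl, fun k hk => if_neg (by omega), by simp, ?_⟩
    simp [Xm_zero]
  | succ n ih =>
    obtain ⟨a, han, hagt, ha0, hs⟩ := ih
    refine ⟨fun k => (if k = 0 then 0 else a (k-1)) - c n * a k, ?_, ?_, ?_, ?_⟩
    · simp [han, hagt (n+1) (by omega)]
    · intro k hk
      have h1 : a (k-1) = 0 := hagt _ (by omega)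
      have h2 : a k = 0 := hagt _ (by omega)
      simp [h1, h2, if_neg (by omega : ¬ k = 0)]
    · simp [ha0, Finset.prod_range_succ]
      ring
    · rw [Finset.prod_range_succ, hs, mul_sub, Finset.sum_mul, Finset.sum_mul]
      have h1 : ∀ k ∈ Finset.range (n+1), (a k • Xm A (k:ℤ) 0) * Xm A 1 0
          = a k • Xm A ((k+1 : ℕ):ℤ) 0 := by
        intro k _
        rw [smul_mul_assoc, Xm_mul]
        push_cast
        ring_nf
      have h2 : ∀ k ∈ Finset.range (n+1), (a k • Xm A (k:ℤ) 0) * CC A (c n)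
          = (c n * a k) • Xm A (k:ℤ) 0 := by
        intro k _
        rw [smul_mul_assoc, mul_comm _ (CC A (c n)), CC_mul_Xm, smul_smul, mul_comm (a k) (c n)]
      rw [Finset.sum_congr rfl h1, Finset.sum_congr rfl h2]
      have hsplit : ∑ k ∈ Finset.range (n+2),
            ((if k = 0 then 0 else a (k-1)) - c n * a k) • Xm A (k:ℤ) 0
          = ∑ k ∈ Finset.range (n+2), (if k = 0 then (0:A) else a (k-1)) • Xm A (k:ℤ) 0
            - ∑ k ∈ Finset.range (n+2), (c n * a k) • Xm A (k:ℤ) 0 := by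
        rw [← Finset.sum_sub_distrib]
        exact Finset.sum_congr rfl fun k _ => by rw [sub_smul]
      rw [hsplit]
      congr 1
      · rw [Finset.sum_range_succ' (fun k => (if k = 0 then (0:A) else a (k-1)) • Xm A (k:ℤ) 0) (n+1)]
        simp
      · rw [Finset.sum_range_succ (fun k => (c n * a k) • Xm A (k:ℤ) 0) (n+1)]
        simp [hagt (n+1) (by omega)]

end St5

namespace St5
open Finset AddMonoidAlgebra

variable {m : ℕ}

instance (m : ℕ) : IsDomain (Av m) := NoZeroDivisors.to_isDomain _
instance (m : ℕ) : IsDomain (Lau (Av m)) := NoZeroDivisors.to_isDomain _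

/-- `ℕ`-indexed version of the `vᵢ`, extended by `1`. -/
def v'' (m : ℕ) (j : ℕ) : Av m := if h : j < m then vv m ⟨j,h⟩ else 1

/-- `v''` as a unit. -/
def uv (m : ℕ) (j : ℕ) : (Av m)ˣ :=
  if h : j < m then uS ((0, Pi.single (⟨j,h⟩ : Fin m) 1) : ℤ × (Fin m → ℤ)) else 1

lemma uv_coe (j : ℕ) : ((uv m j : (Av m)ˣ) : Av m) = v'' m j := by
  by_cases h : j < m <;> simp [uv, v'', h, uS, vv, AddMonoidAlgebra.one_def]

abbrev XX (m : ℕ) : Lau (Av m) := Xm (Av m) 1 0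
abbrev YY (m : ℕ) : Lau (Av m) := Xm (Av m) 0 1
abbrev Cv (m : ℕ) (j : ℕ) : Lau (Av m) := CC (Av m) (v'' m j)

lemma fv1_eq : fv1 m = ∏ j ∈ Finset.range m, (XX m - Cv m j) := by
  rw [fv1, ← Fin.prod_univ_eq_prod_range (fun j => XX m - Cv m j) m]
  refine Finset.prod_congr rfl fun i _ => ?_
  congr 1
  simp only [Cv, v'', i.isLt, dif_pos, Fin.eta]

lemma fv2_eq : fv2 m = ∏ j ∈ Finset.range m, (YY m - Cv m j) := by
  rw [fv2, ← Fin.prod_univ_eq_prod_range (fun j => YY m - Cv m j) m]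
  refine Finset.prod_congr rfl fun i _ => ?_
  congr 1
  simp only [Cv, v'', i.isLt, dif_pos, Fin.eta]

/-- The element `Δ = (f(X₁) - f(X₂))/(X₁ - X₂)`. -/
def Dl (m : ℕ) : Lau (Av m) :=
  ∑ l ∈ Finset.range m,
    (∏ j ∈ Finset.range l, (XX m - Cv m j)) * ∏ j ∈ Finset.Ico (l+1) m, (YY m - Cv m j)

/-- Telescoping identity `(X₁ - X₂) Δ = f(X₁) - f(X₂)`. -/
lemma tel_Dl : (XX m - YY m) * Dl m = fv1 m - fv2 m := by
  have key : (XX m - YY m) * Dl m =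
      ∑ l ∈ Finset.range m,
        ((fun n => (∏ j ∈ Finset.range n, (XX m - Cv m j)) * ∏ j ∈ Finset.Ico n m, (YY m - Cv m j)) (l+1)
          - (fun n => (∏ j ∈ Finset.range n, (XX m - Cv m j)) * ∏ j ∈ Finset.Ico n m, (YY m - Cv m j)) l) := by
    rw [Dl, Finset.mul_sum]
    refine Finset.sum_congr rfl fun l hl => ?_
    simp only [Finset.mem_range] at hl
    simp only []
    rw [Finset.prod_range_succ, Finset.prod_eq_prod_Ico_succ_bot hl (fun j => YY m - Cv m j)]
    have : XX m - YY m = (XX m - Cv m l) - (YY m - Cv m l) := by ring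
    rw [this]
    ring
  rw [key, Finset.sum_range_sub
    (fun n => (∏ j ∈ Finset.range n, (XX m - Cv m j)) * ∏ j ∈ Finset.Ico n m, (YY m - Cv m j)) m]
  rw [fv1_eq, fv2_eq, Finset.range_eq_Ico]
  simp

end St5

namespace St5
open Finset AddMonoidAlgebra

variable {m : ℕ}

abbrev Idl (m : ℕ) : Ideal (Lau (Av m)) := Ideal.span {fv1 m, fv2 m}

lemma f1_mem : fv1 m ∈ Idl m := Ideal.subset_span (by simp)
lemma f2_mem : fv2 m ∈ Idl m := Ideal.subset_span (by simp)

lemma pr_eq_zero {p : Lau (Av m)} (h : p ∈ Idl m) : pr m p = 0 :=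
  (Ideal.Quotient.eq_zero_iff_mem).mpr h

lemma pr_smul (a : Av m) (q : Lau (Av m)) : pr m (a • q) = a • pr m q :=
  map_smul (Ideal.Quotient.mkₐ (Av m) (Idl m)) a q

lemma sw_fv1 : sw (Av m) (fv1 m) = fv2 m := by
  rw [fv1_eq, fv2_eq, sw_eq, map_prod]
  refine Finset.prod_congr rfl fun j _ => ?_
  rw [← sw_eq, sw_sub, sw_Xm, sw_CC]

lemma sw_fv2 : sw (Av m) (fv2 m) = fv1 m := by
  rw [fv2_eq, fv1_eq, sw_eq, map_prod]
  refine Finset.prod_congr rfl fun j _ => ?_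
  rw [← sw_eq, sw_sub, sw_Xm, sw_CC]

lemma xy_ne : (XX m - YY m) ≠ 0 := by
  intro h
  have h2 := congrArg (fun p : Lau (Av m) => p.coeff ((1:ℤ),(0:ℤ))) h
  simp only [Xm] at h2
  rw [AddMonoidAlgebra.coeff_sub, Finsupp.sub_apply] at h2
  rw [AddMonoidAlgebra.coeff_single, AddMonoidAlgebra.coeff_single, Finsupp.single_apply, Finsupp.single_apply] at h2
  simp at h2

lemma sw_Dl : sw (Av m) (Dl m) = Dl m := by
  have h1 : (XX m - YY m) * sw (Av m) (Dl m) = (XX m - YY m) * Dl m := by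
    have h2 : sw (Av m) ((XX m - YY m) * Dl m) = sw (Av m) (fv1 m - fv2 m) := by rw [tel_Dl]
    rw [sw_mul, sw_sub, sw_sub, sw_Xm, sw_Xm, sw_fv1, sw_fv2] at h2
    have h3 : (YY m - XX m) * sw (Av m) (Dl m) = -(fv1 m - fv2 m) := by
      rw [h2]; ring
    rw [tel_Dl]
    have h4 : (XX m - YY m) * sw (Av m) (Dl m)
        = -((YY m - XX m) * sw (Av m) (Dl m)) := by ring
    rw [h4, h3]; ring
  exact mul_left_cancel₀ xy_ne h1

lemma sw_ideal {p : Lau (Av m)} (h : p ∈ Idl m) : sw (Av m) p ∈ Idl m := by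
  rw [Ideal.mem_span_pair] at h ⊢
  obtain ⟨u, w, rfl⟩ := h
  exact ⟨sw (Av m) w, sw (Av m) u, by rw [sw_add, sw_mul, sw_mul, sw_fv1, sw_fv2]; ring⟩

/-- Symmetric representative of `Δ X₁ⁿ`. -/
def Gk (m : ℕ) (n : ℕ) : Lau (Av m) := Dl m * Xm (Av m) (n:ℤ) 0 - fv1 m * sN (Av m) n

lemma sw_Gk (n : ℕ) : sw (Av m) (Gk m n) = Gk m n := by
  have h1 : sw (Av m) (Gk m n) = Dl m * Xm (Av m) 0 (n:ℤ) - fv2 m * sN (Av m) n := by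
    rw [Gk, sw_sub, sw_mul, sw_mul, sw_Dl, sw_Xm, sw_fv1, sw_sN]
  rw [h1, Gk]
  have h2 : Dl m * Xm (Av m) 0 (n:ℤ) - Dl m * Xm (Av m) (n:ℤ) 0
      = -(Dl m * ((XX m - YY m) * sN (Av m) n)) := by
    rw [tel_sN]; ring
  have h3 : Dl m * ((XX m - YY m) * sN (Av m) n) = (fv1 m - fv2 m) * sN (Av m) n := by
    rw [show Dl m * ((XX m - YY m) * sN (Av m) n) = ((XX m - YY m) * Dl m) * sN (Av m) n by ring,
      tel_Dl]
  have : Dl m * Xm (Av m) 0 (n:ℤ) - fv2 m * sN (Av m) n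
      - (Dl m * Xm (Av m) (n:ℤ) 0 - fv1 m * sN (Av m) n) = 0 := by
    rw [show Dl m * Xm (Av m) 0 (n:ℤ) - fv2 m * sN (Av m) n
      - (Dl m * Xm (Av m) (n:ℤ) 0 - fv1 m * sN (Av m) n)
      = (Dl m * Xm (Av m) 0 (n:ℤ) - Dl m * Xm (Av m) (n:ℤ) 0)
        + (fv1 m - fv2 m) * sN (Av m) n by ring, h2, h3]
    ring
  linear_combination (norm := ring_nf) this

lemma pr_Gk (n : ℕ) : pr m (Gk m n) = pr m (Dl m * Xm (Av m) (n:ℤ) 0) := by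
  rw [Gk, map_sub, pr_eq_zero (Ideal.mul_mem_right _ _ f1_mem), sub_zero]

lemma symW_DlXn (n : ℕ) : symW m (pr m (Dl m * Xm (Av m) (n:ℤ) 0)) :=
  ⟨Gk m n, sw_Gk n, pr_Gk n⟩

/-- Target module. -/
def NN (m : ℕ) : Submodule (Av m) (Rmq m) :=
  Submodule.span (Av m) (Set.range fun k : Fin m => pr m (Dl m * Xm (Av m) ((k:ℕ):ℤ) 0))

/-- The quotient image of `Δ X₁ᵉ`. -/
def PP (m : ℕ) (e : ℤ) : Rmq m := pr m (Dl m * Xm (Av m) e 0)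

def aE (m : ℕ) : ℕ → Av m := Classical.choose (exp_prod m (v'' m))

lemma aE_spec : aE m m = 1 ∧ (∀ k, m < k → aE m k = 0) ∧
    aE m 0 = ∏ j ∈ Finset.range m, (-(v'' m j)) ∧
    fv1 m = ∑ k ∈ Finset.range (m+1), aE m k • Xm (Av m) (k:ℤ) 0 := by
  have h := Classical.choose_spec (exp_prod m (v'' m))
  exact ⟨h.1, h.2.1, h.2.2.1, by rw [fv1_eq]; exact h.2.2.2⟩

lemma aE_unit : IsUnit (aE m 0) := by
  rw [aE_spec.2.2.1]
  have : (∏ j ∈ Finset.range m, (-(v'' m j)))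
      = ((∏ j ∈ Finset.range m, (-(uv m j)) : (Av m)ˣ) : Av m) := by
    rw [Units.coe_prod _ _]
    exact Finset.prod_congr rfl fun j _ => by rw [Units.val_neg, uv_coe]
  rw [this]
  exact Units.isUnit _

lemma REL (t : ℤ) : ∑ k ∈ Finset.range (m+1), aE m k • PP m (t + k) = 0 := by
  have h1 : Dl m * Xm (Av m) t 0 * fv1 m
      = ∑ k ∈ Finset.range (m+1), aE m k • (Dl m * Xm (Av m) (t + k) 0) := by
    conv_lhs => rw [aE_spec.2.2.2]
    rw [Finset.mul_sum]
    refine Finset.sum_congr rfl fun k _ => ?_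
    rw [mul_smul_comm, mul_assoc, Xm_mul]
    norm_num
  have h2 : pr m (Dl m * Xm (Av m) t 0 * fv1 m) = 0 :=
    pr_eq_zero (Ideal.mul_mem_left _ _ f1_mem)
  rw [h1, map_sum] at h2
  rw [← h2]
  exact Finset.sum_congr rfl fun k _ => by rw [pr_smul]; rfl

lemma PP_up : ∀ n : ℕ, PP m ((n:ℕ):ℤ) ∈ NN m := by
  intro n
  induction n using Nat.strong_induction_on with
  | _ n ih =>
    by_cases h : n < m
    · exact Submodule.subset_span ⟨⟨n, h⟩, rfl⟩
    · push_neg at h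
      have hrel := REL (m := m) ((n:ℤ) - m)
      rw [Finset.sum_range_succ] at hrel
      have he : (n:ℤ) - m + m = n := by ring
      rw [he, aE_spec.1, one_smul] at hrel
      rw [eq_neg_of_add_eq_zero_right hrel]
      refine Submodule.neg_mem _ (Submodule.sum_mem _ fun k hk => Submodule.smul_mem _ _ ?_)
      simp only [Finset.mem_range] at hk
      have hcast : (n:ℤ) - m + k = ((n - m + k : ℕ) : ℤ) := by omega
      rw [hcast]
      exact ih _ (by omega)

lemma PP_down : ∀ d : ℕ, PP m (-(d:ℤ)) ∈ NN m := by
  intro d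
  induction d using Nat.strong_induction_on with
  | _ d ih =>
    rcases Nat.eq_zero_or_pos d with rfl | hd
    · simpa using PP_up (m := m) 0
    · have hrel := REL (m := m) (-(d:ℤ))
      rw [Finset.sum_range_succ' (fun k => aE m k • PP m (-(d:ℤ) + k)) m] at hrel
      push_cast at hrel
      simp only [add_zero] at hrel
      have hmem : ∑ k ∈ Finset.range m, aE m (k+1) • PP m (-(d:ℤ) + ((k:ℤ)+1)) ∈ NN m := by
        refine Submodule.sum_mem _ fun k hk => Submodule.smul_mem _ _ ?_
        set e : ℤ := -(d:ℤ) + ((k:ℤ)+1) with hedef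
        rcases le_or_gt 0 e with hee | hee
        · have h5 : e = ((e.toNat : ℕ) : ℤ) := by omega
          rw [h5]
          exact PP_up _
        · have h5 : e = -((e.natAbs : ℕ) : ℤ) := by omega
          rw [h5]
          exact ih e.natAbs (by omega)
      have ha := eq_neg_of_add_eq_zero_right hrel
      obtain ⟨u, hu⟩ := aE_unit (m := m)
      have h6 : PP m (-(d:ℤ)) = (↑u⁻¹ : Av m) • (aE m 0 • PP m (-(d:ℤ))) := by
        rw [smul_smul, ← hu, Units.inv_mul, one_smul]
      rw [h6, ha]
      exact Submodule.smul_mem _ _ (Submodule.neg_mem _ hmem)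

end St5

namespace St5
open Finset AddMonoidAlgebra

variable {m : ℕ}

lemma PP_mem (e : ℤ) : PP m e ∈ NN m := by
  rcases le_or_gt 0 e with he | he
  · have : e = ((e.toNat : ℕ) : ℤ) := by omega
    rw [this]; exact PP_up _
  · have : e = -((e.natAbs : ℕ) : ℤ) := by omega
    rw [this]; exact PP_down _

lemma f1f2_mem : fv1 m - fv2 m ∈ Idl m := Submodule.sub_mem _ f1_mem f2_mem

lemma DlXm_mem (a b : ℤ) : pr m (Dl m * Xm (Av m) a b) ∈ NN m := by
  obtain ⟨s, hs⟩ := dvd_xy (A := Av m) b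
  have key : Dl m * Xm (Av m) a b
      = Dl m * Xm (Av m) (a+b) 0 - (fv1 m - fv2 m) * (Xm (Av m) a 0 * s) := by
    have h1 : Xm (Av m) a b - Xm (Av m) (a+b) 0
        = -(Xm (Av m) a 0 * (Xm (Av m) b 0 - Xm (Av m) 0 b)) := by
      rw [mul_sub, Xm_mul, Xm_mul]
      ring_nf
    have h2 : Dl m * (Xm (Av m) a b - Xm (Av m) (a+b) 0)
        = -((XX m - YY m) * Dl m * (Xm (Av m) a 0 * s)) := by
      rw [h1, hs]; ring
    rw [tel_Dl] at h2
    linear_combination h2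
  rw [key, map_sub, pr_eq_zero (Ideal.mul_mem_right _ _ f1f2_mem), sub_zero]
  exact PP_mem (a+b)

lemma Dl_mul_mem (h : Lau (Av m)) : pr m (Dl m * h) ∈ NN m := by
  induction h using AddMonoidAlgebra.induction_on with
  | of g =>
    obtain ⟨a, b⟩ := g
    exact DlXm_mem a b
  | add f g hf hg =>
    rw [mul_add, map_add]
    exact Submodule.add_mem _ hf hg
  | smul c f hf =>
    rw [mul_smul_comm, pr_smul]
    exact Submodule.smul_mem _ _ hf

/-- Evaluation at `X₁ = X₂ = vᵢ`. -/
def εi (m : ℕ) (i : Fin m) : Lau (Av m) →ₐ[Av m] Av m := evh (uv m i) (uv m i)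

lemma εi_Xn (i : Fin m) (k : ℕ) : εi m i (Xm (Av m) (k:ℤ) 0) = (v'' m i)^k := by
  rw [εi, evh_Xm]
  rw [zpow_natCast, zpow_zero]
  simp [uv_coe]

lemma εi_lin (i : Fin m) (j : ℕ) (Z : Lau (Av m)) (hZ : Z = XX m - Cv m j ∨ Z = YY m - Cv m j) :
    εi m i Z = v'' m i - v'' m j := by
  rcases hZ with rfl | rfl <;>
  · rw [map_sub, εi, evh_Xm, evh_CC]
    simp [uv_coe]

lemma εi_fv1 (i : Fin m) : εi m i (fv1 m) = 0 := by
  rw [fv1_eq, map_prod]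
  refine Finset.prod_eq_zero (Finset.mem_range.mpr i.isLt) ?_
  rw [εi_lin i i _ (Or.inl rfl)]
  simp [v'', i.isLt]

lemma εi_fv2 (i : Fin m) : εi m i (fv2 m) = 0 := by
  rw [fv2_eq, map_prod]
  refine Finset.prod_eq_zero (Finset.mem_range.mpr i.isLt) ?_
  rw [εi_lin i i _ (Or.inr rfl)]
  simp [v'', i.isLt]

lemma εi_Idl (i : Fin m) {p : Lau (Av m)} (h : p ∈ Idl m) : εi m i p = 0 := by
  rw [Ideal.mem_span_pair] at h
  obtain ⟨u, w, rfl⟩ := h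
  rw [map_add, map_mul, map_mul, εi_fv1, εi_fv2]
  ring

lemma vdiff_ne (i : Fin m) (j : ℕ) (hj : j < m) (hij : (i:ℕ) ≠ j) :
    v'' m i - v'' m j ≠ 0 := by
  have h1 : v'' m i = vv m i := by simp [v'', i.isLt]
  have h2 : v'' m j = vv m ⟨j, hj⟩ := by simp [v'', hj]
  rw [h1, h2, sub_ne_zero, vv, vv]
  intro h
  have h3 := (AddMonoidAlgebra.single_left_inj (one_ne_zero)).1 h
  have h4 := congrArg Prod.snd h3
  simp only [] at h4
  have h5 := congrFun h4 i
  rw [Pi.single_apply, Pi.single_apply, if_pos rfl] at h5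
  rw [if_neg (fun hc : i = ⟨j,hj⟩ => hij (congrArg Fin.val hc))] at h5
  simp at h5

/-- The value of `Δ` at the diagonal point. -/
def Di (m : ℕ) (i : Fin m) : Av m :=
  (∏ j ∈ Finset.range i, (v'' m i - v'' m j)) * ∏ j ∈ Finset.Ico ((i:ℕ)+1) m, (v'' m i - v'' m j)

lemma εi_Dl (i : Fin m) : εi m i (Dl m) = Di m i := by
  rw [Dl, map_sum]
  rw [Finset.sum_eq_single (i:ℕ)]
  · rw [map_mul, map_prod, map_prod, Di]
    congr 1
    · exact Finset.prod_congr rfl fun j _ => εi_lin i j _ (Or.inl rfl)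
    · exact Finset.prod_congr rfl fun j _ => εi_lin i j _ (Or.inr rfl)
  · intro l _ hl
    rw [map_mul, map_prod, map_prod]
    rcases lt_or_gt_of_ne hl with h | h
    · -- l < i : second product, over Ico (l+1) m, contains i
      refine mul_eq_zero_of_right _ (Finset.prod_eq_zero (i := (i:ℕ))
        (Finset.mem_Ico.mpr ⟨by omega, i.isLt⟩) ?_)
      rw [εi_lin i (i:ℕ) _ (Or.inr rfl)]
      ring
    · -- i < l : first product contains i
      refine mul_eq_zero_of_left (Finset.prod_eq_zero (i := (i:ℕ))
        (Finset.mem_range.mpr (by omega)) ?_) _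
      rw [εi_lin i (i:ℕ) _ (Or.inl rfl)]
      ring
  · intro hni
    exact absurd (Finset.mem_range.mpr i.isLt) hni

lemma Di_ne (i : Fin m) : Di m i ≠ 0 := by
  rw [Di]
  refine mul_ne_zero ?_ ?_ <;>
  · rw [Finset.prod_ne_zero_iff]
    intro j hj
    first
    | exact vdiff_ne i j (by simp only [Finset.mem_range] at hj; omega)
        (by simp only [Finset.mem_range] at hj; omega)
    | exact vdiff_ne i j (by simp only [Finset.mem_Ico] at hj; omega)
        (by simp only [Finset.mem_Ico] at hj; omega)

lemma linind : LinearIndependent (Av m)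
    (fun k : Fin m => pr m (Dl m * Xm (Av m) ((k:ℕ):ℤ) 0)) := by
  rw [Fintype.linearIndependent_iff]
  intro g hsum
  set Q : Lau (Av m) := ∑ k : Fin m, g k • Xm (Av m) ((k:ℕ):ℤ) 0 with hQ
  have h1 : pr m (Dl m * Q) = 0 := by
    rw [hQ, Finset.mul_sum, map_sum, ← hsum]
    refine Finset.sum_congr rfl fun k _ => ?_
    rw [mul_smul_comm, pr_smul]
  have h2 : Dl m * Q ∈ Idl m := by
    rwa [pr, Ideal.Quotient.eq_zero_iff_mem] at h1
  have h3 : ∀ i : Fin m, ∑ k : Fin m, g k * (v'' m i)^(k:ℕ) = 0 := by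
    intro i
    have h4 := εi_Idl i h2
    rw [map_mul, εi_Dl] at h4
    have h5 : εi m i Q = ∑ k : Fin m, g k * (v'' m i)^(k:ℕ) := by
      rw [hQ, map_sum]
      refine Finset.sum_congr rfl fun k _ => ?_
      rw [map_smul, εi_Xn, smul_eq_mul]
    rw [h5] at h4
    rcases mul_eq_zero.mp h4 with h | h
    · exact absurd h (Di_ne i)
    · exact h
  -- Vandermonde
  set V : Matrix (Fin m) (Fin m) (Av m) := Matrix.vandermonde (fun i => v'' m i) with hV
  have hmv : V.mulVec g = 0 := by
    funext i
    simp only [Matrix.mulVec, dotProduct, Pi.zero_apply]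
    rw [← h3 i]
    refine Finset.sum_congr rfl fun k _ => ?_
    simp only [hV, Matrix.vandermonde_apply]
    ring
  have hdet : V.det ≠ 0 := by
    rw [hV, Matrix.det_vandermonde]
    rw [Finset.prod_ne_zero_iff]
    intro i _
    rw [Finset.prod_ne_zero_iff]
    intro j hj
    simp only [Finset.mem_Ioi] at hj
    have hlt : (i:ℕ) < (j:ℕ) := hj
    exact vdiff_ne j (i:ℕ) i.isLt (by omega)
  intro i
  have h6 : (V.adjugate).mulVec (V.mulVec g) = 0 := by rw [hmv, Matrix.mulVec_zero]
  rw [Matrix.mulVec_mulVec, Matrix.adjugate_mul] at h6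
  have h7 := congrFun h6 i
  rw [Matrix.smul_mulVec, Matrix.one_mulVec] at h7
  simp only [Pi.smul_apply, smul_eq_mul, Pi.zero_apply] at h7
  rcases mul_eq_zero.mp h7 with h | h
  · exact absurd h hdet
  · exact h

end St5

namespace St5
open Finset AddMonoidAlgebra

variable {m : ℕ}

lemma pr_eq_pr {a b : Lau (Av m)} : pr m a = pr m b ↔ a - b ∈ Idl m := Ideal.Quotient.eq

lemma XmCC_ne (c : Av m) : Xm (Av m) 1 0 - CC (Av m) c ≠ 0 := by
  intro h
  have h2 := congrArg (fun p : Lau (Av m) => p.coeff ((1:ℤ),(0:ℤ))) h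
  rw [CC_single] at h2
  simp only [Xm] at h2
  rw [AddMonoidAlgebra.coeff_sub, Finsupp.sub_apply] at h2
  rw [AddMonoidAlgebra.coeff_single, AddMonoidAlgebra.coeff_single, Finsupp.single_apply, Finsupp.single_apply] at h2
  norm_num [Prod.ext_iff] at h2

lemma piH_fv1_ne : piH (Av m) (fv1 m) ≠ 0 := by
  have h : piH (Av m) (fv1 m) = ∏ j ∈ Finset.range m, (Xm (Av m) 1 0 - CC (Av m) (v'' m j)) := by
    rw [fv1_eq, map_prod]
    refine Finset.prod_congr rfl fun j _ => ?_
    rw [map_sub, piH_Xm, piH_CC]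
    norm_num
  rw [h, Finset.prod_ne_zero_iff]
  exact fun j _ => XmCC_ne _
lemma piH_xy_zero : piH (Av m) (XX m - YY m) = 0 := by
  rw [map_sub, piH_Xm, piH_Xm]
  norm_num

end St5


open St5 in
theorem stmt5 (m : ℕ) :
    ∃ b : Fin m → Rmq m,
      (∀ k, symW m (b k) ∧ symW m (pr m (Xm (Av m) 1 0) * b k)) ∧
      LinearIndependent (Av m) b ∧
      ∀ x : Rmq m, symW m x → symW m (pr m (Xm (Av m) 1 0) * x) →
        x ∈ Submodule.span (Av m) (Set.range b) := by
  classical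
  refine ⟨fun k : Fin m => pr m (Dl m * Xm (Av m) ((k:ℕ):ℤ) 0), fun k => ⟨symW_DlXn k, ?_⟩, linind, ?_⟩
  · -- symW (X₁ · b k)
    have h1 : pr m (Xm (Av m) 1 0) * pr m (Dl m * Xm (Av m) ((k:ℕ):ℤ) 0)
        = pr m (Dl m * Xm (Av m) (((k:ℕ)+1 : ℕ):ℤ) 0) := by
      rw [← map_mul]
      congr 1
      rw [show Xm (Av m) 1 0 * (Dl m * Xm (Av m) ((k:ℕ):ℤ) 0)
        = Dl m * (Xm (Av m) ((k:ℕ):ℤ) 0 * Xm (Av m) 1 0) by ring, Xm_mul]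
      push_cast
      norm_num
    rw [h1]
    exact symW_DlXn _
  · -- spanning
    intro x hx hxx
    obtain ⟨g, hsg, hpg⟩ := hx
    obtain ⟨h, hsh, hph⟩ := hxx
    have h1 : XX m * g - h ∈ Idl m := by
      rw [← pr_eq_pr, map_mul, hpg, hph]
    have h2 : YY m * g - h ∈ Idl m := by
      have := sw_ideal h1
      rwa [sw_sub, sw_mul, sw_Xm, hsg, hsh] at this
    have h3 : (XX m - YY m) * g ∈ Idl m := by
      have : (XX m - YY m) * g = (XX m * g - h) - (YY m * g - h) := by ring
      rw [this]
      exact Submodule.sub_mem _ h1 h2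
    rw [Ideal.mem_span_pair] at h3
    obtain ⟨u, w, huw⟩ := h3
    have key : (XX m - YY m) * (g + w * Dl m) = (u + w) * fv1 m := by
      linear_combination (-1 : Lau (Av m)) * huw + w * (tel_Dl (m := m))
    have hpi : piH (Av m) (u + w) * piH (Av m) (fv1 m) = 0 := by
      have := congrArg (piH (Av m)) key
      rw [map_mul, map_mul, piH_xy_zero, zero_mul] at this
      exact this.symm
    have h4 : piH (Av m) (u + w) = 0 := by
      rcases mul_eq_zero.mp hpi with h | h
      · exact h
      · exact absurd h piH_fv1_ne
    obtain ⟨r, hr⟩ := piH_sub_dvd (u + w)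
    rw [h4, sub_zero] at hr
    have h5 : (XX m - YY m) * (g + w * Dl m) = (XX m - YY m) * (r * fv1 m) := by
      rw [key, hr]
      ring
    have h6 : g = r * fv1 m - w * Dl m := by
      have := mul_left_cancel₀ xy_ne h5
      linear_combination this
    have h7 : x = - pr m (Dl m * w) := by
      rw [← hpg, h6, map_sub, pr_eq_zero (Ideal.mul_mem_left _ _ f1_mem)]
      rw [show Dl m * w = w * Dl m by ring]
      ring
    rw [h7]
    exact Submodule.neg_mem _ (Dl_mul_mem w)
end
end

section
/- With notation as in the paper: the elements $X_1^{k-1} z$ for $0 \le k \le m-1$, where $z = (-1)^{m+1} e_m + X_1X_2\sum_{j=0}^{m-2}(-1)^j e_j H_{m-2-j}$ and multiplication is computed in $R_m$ (using the relation $f_{\mathbf v}(X_i) = 0$), are linearly independent over $A$. More precisely, when $X_1^{k-1}z$ is written in the basis of restricted monomial symmetric functions $\{m_{ij} : 0 \le i \le j \le m-1\}$, the coefficient of $m_{j(m-1)}$ is $\delta_{jk}$. -/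
noncomputable section

variable (A : Type) [CommRing A]

-- chunk 1: basics
open Finset AddMonoidAlgebra

variable {A : Type} [CommRing A]

lemma Xm_mul_s13 (a b c d : ℤ) : Xm A a b * Xm A c d = Xm A (a+c) (b+d) := by
  simp [Xm, AddMonoidAlgebra.single_mul_single]

lemma CC_eq (r : A) : CC A r = AddMonoidAlgebra.single (0,0) r := by
  simp [CC, AddMonoidAlgebra.coe_algebraMap]; rfl

lemma CC_mul_Xm (r : A) (a b : ℤ) : CC A r * Xm A a b = AddMonoidAlgebra.single (a,b) r := by
  rw [CC_eq, Xm, AddMonoidAlgebra.single_mul_single]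
  simp

lemma smul_Xm (r : A) (a b : ℤ) : r • Xm A a b = AddMonoidAlgebra.single (a,b) r := by
  rw [Xm, AddMonoidAlgebra.smul_single']
  simp

lemma smul_eq_CC_mul (r : A) (p : Lau A) : r • p = CC A r * p := by
  simp [CC, Algebra.smul_def]

lemma Xm_pow (n : ℕ) : (Xm A 1 0) ^ n = Xm A n 0 := by
  induction n with
  | zero => simp [Xm]; rfl
  | succ n ih => rw [pow_succ, ih, Xm_mul_s13]; norm_num

lemma one_eq_Xm : (1 : Lau A) = Xm A 0 0 := rfl

/-- `Hd t = H_{t-1}`, with `Hd 0 = 0`. -/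
def Hd (t : ℕ) : Lau A := ∑ i ∈ Finset.range t, Xm A (i : ℤ) ((t : ℤ) - 1 - (i : ℤ))

lemma Hc_eq_Hd (k : ℕ) : Hc A k = Hd (k+1) := by
  unfold Hc Hd
  apply Finset.sum_congr rfl
  intro i _
  congr 1
  push_cast
  ring

lemma telescope (t : ℕ) : (Xm A 1 0 - Xm A 0 1) * Hd t = Xm A t 0 - Xm A 0 t := by
  unfold Hd
  rw [sub_mul, Finset.mul_sum, Finset.mul_sum]
  have : ∀ i : ℕ, Xm A 1 0 * Xm A i ((t:ℤ)-1-i) = Xm A (i+1) ((t:ℤ)-(i+1)) := by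
    intro i; rw [Xm_mul_s13]; congr 1 <;> push_cast <;> ring
  have h2 : ∀ i : ℕ, Xm A 0 1 * Xm A i ((t:ℤ)-1-i) = Xm A i ((t:ℤ)-i) := by
    intro i; rw [Xm_mul_s13]; congr 1 <;> push_cast <;> ring
  calc (∑ i ∈ range t, Xm A 1 0 * Xm A i ((t:ℤ)-1-i)) - ∑ i ∈ range t, Xm A 0 1 * Xm A i ((t:ℤ)-1-i)
      = ∑ i ∈ range t, ((fun n : ℕ => Xm A n ((t:ℤ)-n)) (i+1) - (fun n : ℕ => Xm A n ((t:ℤ)-n)) i) := by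
        rw [Finset.sum_sub_distrib]
        congr 1 <;> refine Finset.sum_congr rfl (fun i _ => ?_)
        · rw [this]; norm_num
        · rw [h2]
    _ = Xm A t 0 - Xm A 0 t := by
        rw [Finset.sum_range_sub (fun n : ℕ => Xm A n ((t:ℤ)-n))]
        norm_num
-- chunk 2: Vieta
lemma CC_hom (x y : A) : CC A (x*y) = CC A x * CC A y := map_mul (algebraMap A (Lau A)) _ _
lemma CC_sum {ι : Type} (s : Finset ι) (f : ι → A) :
    CC A (∑ i ∈ s, f i) = ∑ i ∈ s, CC A (f i) := map_sum (algebraMap A (Lau A)) _ _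
lemma CC_prod {ι : Type} (s : Finset ι) (f : ι → A) :
    CC A (∏ i ∈ s, f i) = ∏ i ∈ s, CC A (f i) := map_prod (algebraMap A (Lau A)) _ _
lemma CC_neg (a : A) : CC A (-a) = -CC A a := map_neg (algebraMap A (Lau A)) _
lemma CC_pow (a : A) (n : ℕ) : CC A (a^n) = (CC A a)^n := map_pow (algebraMap A (Lau A)) _ _
lemma CC_one : CC A 1 = 1 := map_one (algebraMap A (Lau A))
lemma CC_add (a b : A) : CC A (a+b) = CC A a + CC A b := map_add (algebraMap A (Lau A)) _ _

lemma vieta_gen (m : ℕ) (X : Lau (Av m)) :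
    (∏ i : Fin m, (X - CC (Av m) (vv m i))) =
      ∑ j ∈ range (m+1), CC (Av m) ((-1:Av m)^j * ev m j) * X ^ (m - j) := by
  have h1 : (∏ i : Fin m, (X - CC (Av m) (vv m i)))
      = ∏ i : Fin m, ((fun i => -CC (Av m) (vv m i)) i + (fun _ => X) i) := by
    refine Finset.prod_congr rfl fun i _ => by ring
  rw [h1, Finset.prod_add, Finset.sum_powerset]
  have hcard : (univ : Finset (Fin m)).card = m := Finset.card_univ.trans (Fintype.card_fin m)
  rw [hcard]
  refine Finset.sum_congr rfl fun j hj => ?_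
  have hjm : j ≤ m := Nat.lt_succ_iff.mp (Finset.mem_range.mp hj)
  rw [CC_hom, Finset.sum_congr rfl (g := fun t =>
      (CC (Av m) ((-1:Av m)^j) * CC (Av m) (∏ i ∈ t, vv m i)) * X ^ (m - j)) ?_]
  · rw [← Finset.sum_mul, ← Finset.mul_sum]
    congr 2
    rw [ev, CC_sum]
  · intro t ht
    obtain ⟨hts, htc⟩ := Finset.mem_powersetCard.mp ht
    have h2 : (∏ i ∈ t, -CC (Av m) (vv m i))
        = CC (Av m) ((-1:Av m)^j) * CC (Av m) (∏ i ∈ t, vv m i) := by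
      have hneg : ∀ i ∈ t, -CC (Av m) (vv m i) = CC (Av m) (-1) * CC (Av m) (vv m i) := by
        intro i _; rw [CC_neg, CC_one]; ring
      rw [Finset.prod_congr rfl hneg, Finset.prod_mul_distrib, Finset.prod_const, htc,
        ← CC_pow, ← CC_prod]
    have h3 : (∏ _i ∈ univ \ t, X) = X ^ (m - j) := by
      rw [Finset.prod_const, Finset.card_sdiff_of_subset hts, hcard, htc]
    rw [h2, h3]

lemma vieta1 (m : ℕ) :
    fv1 m = ∑ j ∈ range (m+1), CC (Av m) ((-1:Av m)^j * ev m j) * Xm (Av m) ((m:ℤ) - j) 0 := by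
  rw [fv1, vieta_gen]
  refine Finset.sum_congr rfl fun j hj => ?_
  have hjm : j ≤ m := Nat.lt_succ_iff.mp (Finset.mem_range.mp hj)
  rw [Xm_pow, show ((m - j : ℕ) : ℤ) = (m:ℤ) - j by omega]

lemma Xm01_pow (n : ℕ) : (Xm A 0 1) ^ n = Xm A 0 n := by
  induction n with
  | zero => simp [Xm]; rfl
  | succ n ih => rw [pow_succ, ih, Xm_mul_s13]; norm_num

lemma vieta2 (m : ℕ) :
    fv2 m = ∑ j ∈ range (m+1), CC (Av m) ((-1:Av m)^j * ev m j) * Xm (Av m) 0 ((m:ℤ) - j) := by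
  rw [fv2, vieta_gen]
  refine Finset.sum_congr rfl fun j hj => ?_
  have hjm : j ≤ m := Nat.lt_succ_iff.mp (Finset.mem_range.mp hj)
  rw [Xm01_pow, show ((m - j : ℕ) : ℤ) = (m:ℤ) - j by omega]
-- chunk 3: identity B
lemma idB (m : ℕ) (hm : 1 ≤ m) :
    (Xm (Av m) 1 0 - Xm (Av m) 0 1) * zel m
      = Xm (Av m) 0 1 * fv1 m - Xm (Av m) 1 0 * fv2 m := by
  obtain ⟨n, rfl⟩ : ∃ n, m = n + 1 := ⟨m - 1, by omega⟩
  set m := n + 1 with hmdef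
  have hR : Xm (Av m) 0 1 * fv1 m - Xm (Av m) 1 0 * fv2 m
      = ∑ j ∈ range (m+1), CC (Av m) ((-1:Av m)^j * ev m j) *
          (Xm (Av m) ((m:ℤ)-j) 1 - Xm (Av m) 1 ((m:ℤ)-j)) := by
    rw [vieta1, vieta2, Finset.mul_sum, Finset.mul_sum, ← Finset.sum_sub_distrib]
    refine Finset.sum_congr rfl fun j _ => ?_
    have e1 : Xm (Av m) 0 1 * Xm (Av m) ((m:ℤ)-j) 0 = Xm (Av m) ((m:ℤ)-j) 1 := by
      rw [Xm_mul_s13]; norm_num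
    have e2 : Xm (Av m) 1 0 * Xm (Av m) 0 ((m:ℤ)-j) = Xm (Av m) 1 ((m:ℤ)-j) := by
      rw [Xm_mul_s13]; norm_num
    rw [mul_left_comm, mul_left_comm (Xm (Av m) 1 0), e1, e2, ← mul_sub]
  rw [hR, Finset.sum_range_succ, Finset.sum_range_succ]
  have hDn : Xm (Av m) ((m:ℤ)-(n:ℤ)) 1 - Xm (Av m) 1 ((m:ℤ)-(n:ℤ)) = 0 := by
    rw [show ((m:ℤ)-(n:ℤ)) = 1 by push_cast [hmdef]; ring, sub_self]
  have hDtop : Xm (Av m) ((m:ℤ)-((m:ℕ):ℤ)) 1 - Xm (Av m) 1 ((m:ℤ)-((m:ℕ):ℤ)) =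
      Xm (Av m) 0 1 - Xm (Av m) 1 0 := by norm_num
  rw [hDn, hDtop, mul_zero, add_zero]
  -- now handle LHS
  rw [zel]
  have hr1 : m - 1 = n := by omega
  rw [hr1]
  rw [mul_add, Finset.mul_sum, Finset.mul_sum]
  have hterm : ∀ j ∈ range n,
      (Xm (Av m) 1 0 - Xm (Av m) 0 1) *
        (Xm (Av m) 1 1 * (CC (Av m) ((-1:Av m)^j * ev m j) * Hc (Av m) (m - 2 - j)))
      = CC (Av m) ((-1:Av m)^j * ev m j) *
          (Xm (Av m) ((m:ℤ)-j) 1 - Xm (Av m) 1 ((m:ℤ)-j)) := by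
    intro j hj
    have hjn : j < n := Finset.mem_range.mp hj
    have h1 : m - 2 - j = n - 1 - j := by omega
    have h2 : (n - 1 - j) + 1 = n - j := by omega
    rw [h1, Hc_eq_Hd, h2]
    have h3 : (Xm (Av m) 1 0 - Xm (Av m) 0 1) *
        (Xm (Av m) 1 1 * (CC (Av m) ((-1:Av m)^j * ev m j) * Hd (n-j)))
        = CC (Av m) ((-1:Av m)^j * ev m j) *
            (Xm (Av m) 1 1 * ((Xm (Av m) 1 0 - Xm (Av m) 0 1) * Hd (n-j))) := by ring
    rw [h3, telescope]
    congr 1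
    rw [mul_sub, Xm_mul_s13, Xm_mul_s13]
    have c1 : (1:ℤ) + ((n-j:ℕ):ℤ) = (m:ℤ) - j := by push_cast [hmdef]; omega
    rw [c1]; norm_num
  rw [Finset.sum_congr rfl hterm]
  have htop : (Xm (Av m) 1 0 - Xm (Av m) 0 1) * CC (Av m) ((-1:Av m)^(m+1) * ev m m)
      = CC (Av m) ((-1:Av m)^m * ev m m) * (Xm (Av m) 0 1 - Xm (Av m) 1 0) := by
    rw [show ((-1:Av m))^(m+1) * ev m m = -(((-1:Av m))^m * ev m m) by ring, CC_neg]
    ring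
  rw [htop]; ring
-- chunk 4: Wk, identity C
def Wk (m k : ℕ) : Lau (Av m) :=
  Xm (Av m) k k * ∑ j ∈ range (m-k), CC (Av m) ((-1:Av m)^j * ev m j) * Hd (m-k-j)
  - ∑ i ∈ range k, CC (Av m) ((-1:Av m)^(m-i) * ev m (m-i)) * (Xm (Av m) i i * Hd (k-i))

lemma idC (m k : ℕ) (hk : k < m) :
    (Xm (Av m) 1 0 - Xm (Av m) 0 1) * Wk m k
      = Xm (Av m) 0 k * fv1 m - Xm (Av m) k 0 * fv2 m := by
  have hR : Xm (Av m) 0 k * fv1 m - Xm (Av m) k 0 * fv2 m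
      = ∑ j ∈ range (m+1), CC (Av m) ((-1:Av m)^j * ev m j) *
          (Xm (Av m) ((m:ℤ)-j) k - Xm (Av m) k ((m:ℤ)-j)) := by
    rw [vieta1, vieta2, Finset.mul_sum, Finset.mul_sum, ← Finset.sum_sub_distrib]
    refine Finset.sum_congr rfl fun j _ => ?_
    have e1 : Xm (Av m) 0 k * Xm (Av m) ((m:ℤ)-j) 0 = Xm (Av m) ((m:ℤ)-j) k := by
      rw [Xm_mul_s13]; norm_num
    have e2 : Xm (Av m) k 0 * Xm (Av m) 0 ((m:ℤ)-j) = Xm (Av m) k ((m:ℤ)-j) := by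
      rw [Xm_mul_s13]; norm_num
    rw [mul_left_comm, mul_left_comm (Xm (Av m) k 0), e1, e2, ← mul_sub]
  set T : ℕ → Lau (Av m) := fun j => CC (Av m) ((-1:Av m)^j * ev m j) *
          (Xm (Av m) ((m:ℤ)-j) k - Xm (Av m) k ((m:ℤ)-j)) with hT
  have hsplit : ∑ j ∈ range (m+1), T j
      = ∑ j ∈ range (m-k), T j + ∑ i ∈ range (k+1), T ((m-k) + i) := by
    have h1 : ∑ j ∈ range (m+1), T j
        = ∑ j ∈ Finset.Ico 0 (m-k), T j + ∑ j ∈ Finset.Ico (m-k) (m+1), T j := by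
      rw [Finset.sum_Ico_consecutive T (Nat.zero_le _) (by omega), ← Finset.range_eq_Ico]
    have h2 : ∑ j ∈ Finset.Ico (m-k) (m+1), T j = ∑ i ∈ range (k+1), T ((m-k)+i) := by
      rw [Finset.sum_Ico_eq_sum_range, show m + 1 - (m-k) = k + 1 from by omega]
    rw [h1, h2, ← Finset.range_eq_Ico]
  have hzero : T ((m-k) + 0) = 0 := by
    rw [hT]
    simp only []
    rw [show (m:ℤ) - ((m-k)+0 : ℕ) = (k:ℤ) by push_cast; omega]
    rw [sub_self, mul_zero]
  rw [hR, hsplit, Finset.sum_range_succ', hzero, add_zero]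
  -- LHS
  rw [Wk, mul_sub]
  have hL1 : (Xm (Av m) 1 0 - Xm (Av m) 0 1) *
      (Xm (Av m) k k * ∑ j ∈ range (m-k), CC (Av m) ((-1:Av m)^j * ev m j) * Hd (m-k-j))
      = ∑ j ∈ range (m-k), T j := by
    rw [Finset.mul_sum, Finset.mul_sum]
    refine Finset.sum_congr rfl fun j hj => ?_
    have hjr : j < m - k := Finset.mem_range.mp hj
    have h3 : (Xm (Av m) 1 0 - Xm (Av m) 0 1) *
        (Xm (Av m) k k * (CC (Av m) ((-1:Av m)^j * ev m j) * Hd (m-k-j)))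
        = CC (Av m) ((-1:Av m)^j * ev m j) *
            (Xm (Av m) k k * ((Xm (Av m) 1 0 - Xm (Av m) 0 1) * Hd (m-k-j))) := by ring
    rw [h3, telescope, hT]
    congr 1
    rw [mul_sub, Xm_mul_s13, Xm_mul_s13]
    rw [show (k:ℤ) + ((m-k-j:ℕ):ℤ) = (m:ℤ) - j by push_cast; omega]
    norm_num
  have hL2 : (Xm (Av m) 1 0 - Xm (Av m) 0 1) *
      (∑ i ∈ range k, CC (Av m) ((-1:Av m)^(m-i) * ev m (m-i)) * (Xm (Av m) i i * Hd (k-i)))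
      = - ∑ i ∈ range k, T ((m-k) + (i+1)) := by
    rw [Finset.mul_sum, ← Finset.sum_neg_distrib]
    rw [← Finset.sum_range_reflect (fun i => -T ((m-k) + (i+1))) k]
    refine Finset.sum_congr rfl fun i hi => ?_
    have hik : i < k := Finset.mem_range.mp hi
    have h3 : (Xm (Av m) 1 0 - Xm (Av m) 0 1) *
        (CC (Av m) ((-1:Av m)^(m-i) * ev m (m-i)) * (Xm (Av m) i i * Hd (k-i)))
        = CC (Av m) ((-1:Av m)^(m-i) * ev m (m-i)) *
            (Xm (Av m) i i * ((Xm (Av m) 1 0 - Xm (Av m) 0 1) * Hd (k-i))) := by ring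
    rw [h3, telescope, hT]
    beta_reduce
    have hidx : (m-k) + ((k - 1 - i)+1) = m - i := by omega
    rw [hidx]
    show CC (Av m) ((-1:Av m)^(m-i) * ev m (m-i)) *
        (Xm (Av m) i i * (Xm (Av m) ((k-i:ℕ):ℤ) 0 - Xm (Av m) 0 ((k-i:ℕ):ℤ)))
      = -(CC (Av m) ((-1:Av m)^(m-i) * ev m (m-i)) *
        (Xm (Av m) ((m:ℤ)-((m-i:ℕ):ℤ)) k - Xm (Av m) k ((m:ℤ)-((m-i:ℕ):ℤ))))
    rw [mul_sub, Xm_mul_s13, Xm_mul_s13,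
      show (i:ℤ) + ((k-i:ℕ):ℤ) = (k:ℤ) from by push_cast; omega,
      show (m:ℤ) - ((m-i:ℕ):ℤ) = (i:ℤ) from by push_cast; omega,
      add_zero]
    ring
  rw [hL1, hL2]
  ring
-- chunk 5: ck, idD, key congruence
def ck (m k : ℕ) : Lau (Av m) :=
  if k = 0 then -Xm (Av m) (-1) 0 else Xm (Av m) 0 1 * Hd (k-1)

lemma idD (m k : ℕ) :
    (Xm (Av m) 1 0 - Xm (Av m) 0 1) * ck m k
      = Xm (Av m) ((k:ℤ)-1) 1 - Xm (Av m) 0 k := by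
  rcases Nat.eq_zero_or_pos k with hk | hk
  · subst hk
    rw [ck, if_pos rfl]
    rw [mul_neg, sub_mul, Xm_mul_s13, Xm_mul_s13]
    norm_num
  · rw [ck, if_neg (by omega)]
    rw [show (Xm (Av m) 1 0 - Xm (Av m) 0 1) * (Xm (Av m) 0 1 * Hd (k-1))
        = Xm (Av m) 0 1 * ((Xm (Av m) 1 0 - Xm (Av m) 0 1) * Hd (k-1)) from by ring,
      telescope, mul_sub, Xm_mul_s13, Xm_mul_s13,
      show (0:ℤ) + ((k-1:ℕ):ℤ) = (k:ℤ)-1 from by push_cast; omega,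
      show (1:ℤ) + ((k-1:ℕ):ℤ) = (k:ℤ) from by push_cast; omega]
    norm_num

lemma X1_ne_X2 (m : ℕ) : (Xm (Av m) 1 0 - Xm (Av m) 0 1) ≠ 0 := by
  intro h
  rw [sub_eq_zero] at h
  have h2 : (AddMonoidAlgebra.single ((1:ℤ),(0:ℤ)) (1:Av m)) = AddMonoidAlgebra.single ((0:ℤ),(1:ℤ)) (1:Av m) := h
  rcases AddMonoidAlgebra.single_inj.mp h2 with ⟨h3,-⟩ | ⟨h3,-⟩
  · simp at h3
  · exact one_ne_zero h3

lemma keyid (m k : ℕ) (hm : 1 ≤ m) (hk : k < m) :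
    Xm (Av m) ((k:ℤ)-1) 0 * zel m = Wk m k + ck m k * fv1 m := by
  have h : (Xm (Av m) 1 0 - Xm (Av m) 0 1) *
      (Xm (Av m) ((k:ℤ)-1) 0 * zel m - (Wk m k + ck m k * fv1 m)) = 0 := by
    rw [mul_sub]
    have e1 : (Xm (Av m) 1 0 - Xm (Av m) 0 1) * (Xm (Av m) ((k:ℤ)-1) 0 * zel m)
        = Xm (Av m) ((k:ℤ)-1) 0 * ((Xm (Av m) 1 0 - Xm (Av m) 0 1) * zel m) := by ring
    rw [e1, idB m hm]
    have e2 : (Xm (Av m) 1 0 - Xm (Av m) 0 1) * (Wk m k + ck m k * fv1 m)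
        = (Xm (Av m) 1 0 - Xm (Av m) 0 1) * Wk m k
          + ((Xm (Av m) 1 0 - Xm (Av m) 0 1) * ck m k) * fv1 m := by ring
    rw [e2, idC m k hk, idD m k]
    rw [mul_sub]
    have e3 : Xm (Av m) 0 1 * (Xm (Av m) ((k:ℤ)-1) 0 * fv1 m)
        = Xm (Av m) ((k:ℤ)-1) 1 * fv1 m := by
      rw [← mul_assoc, Xm_mul_s13, show (0:ℤ)+((k:ℤ)-1) = (k:ℤ)-1 from by ring,
        show (1:ℤ)+(0:ℤ) = (1:ℤ) from by ring]
    have e4 : Xm (Av m) 1 0 * (Xm (Av m) ((k:ℤ)-1) 0 * fv2 m)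
        = Xm (Av m) (k:ℤ) 0 * fv2 m := by
      rw [← mul_assoc, Xm_mul_s13, show (1:ℤ)+((k:ℤ)-1) = (k:ℤ) from by ring,
        show (0:ℤ)+(0:ℤ) = (0:ℤ) from by ring]
    rw [mul_left_comm (Xm (Av m) ((k:ℤ)-1) 0) (Xm (Av m) 0 1),
      mul_left_comm (Xm (Av m) ((k:ℤ)-1) 0) (Xm (Av m) 1 0), e3, e4]
    ring
  rcases mul_eq_zero.mp h with h' | h'
  · exact absurd h' (X1_ne_X2 m)
  · exact sub_eq_zero.mp h'

lemma pr_eq_Wk (m k : ℕ) (hm : 1 ≤ m) (hk : k < m) :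
    pr m (Xm (Av m) ((k:ℤ)-1) 0 * zel m) = pr m (Wk m k) := by
  rw [pr, Ideal.Quotient.eq]
  rw [keyid m k hm hk]
  have : Wk m k + ck m k * fv1 m - Wk m k = ck m k * fv1 m := by ring
  rw [this]
  exact Ideal.mul_mem_left _ _ (Ideal.subset_span (by simp))
-- chunk 6: symmetry
section Sw
variable (A : Type) [CommRing A]
def swE : Lau A ≃ₐ[A] Lau A := AddMonoidAlgebra.domCongr A A (AddEquiv.prodComm (M := ℤ) (N := ℤ))

lemma sw_eq_swE (p : Lau A) : sw A p = swE A p := by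
  apply AddMonoidAlgebra.coeff_injective
  ext x
  simp [sw, swE, AddMonoidAlgebra.coeff_domCongr]

lemma swE_Xm (a b : ℤ) : swE A (Xm A a b) = Xm A b a := by
  rw [Xm, Xm, swE, AddMonoidAlgebra.domCongr_single]
  rfl

lemma swE_CC (r : A) : swE A (CC A r) = CC A r := by
  rw [CC_eq, swE, AddMonoidAlgebra.domCongr_single]
  rfl

lemma swE_Hd (t : ℕ) : swE A (Hd t) = Hd t := by
  rw [Hd, map_sum]
  have h : ∀ i ∈ range t, swE A (Xm A (i:ℤ) ((t:ℤ)-1-(i:ℤ))) = Xm A ((t:ℤ)-1-(i:ℤ)) (i:ℤ) :=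
    fun i _ => swE_Xm A _ _
  rw [Finset.sum_congr rfl h]
  rw [← Finset.sum_range_reflect (fun i => Xm A (i:ℤ) ((t:ℤ)-1-(i:ℤ))) t]
  refine Finset.sum_congr rfl fun i hi => ?_
  have hit : i < t := Finset.mem_range.mp hi
  congr 1 <;> [skip; skip] <;>
    · push_cast [show t - 1 - i < t from by omega]
      omega
end Sw
lemma swE_Wk (m k : ℕ) : swE (Av m) (Wk m k) = Wk m k := by
  rw [Wk, map_sub, map_mul, map_sum, swE_Xm]
  congr 1
  · congr 1
    refine Finset.sum_congr rfl fun j _ => ?_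
    rw [map_mul, swE_CC, swE_Hd]
  · rw [map_sum]
    refine Finset.sum_congr rfl fun i _ => ?_
    rw [map_mul, map_mul, swE_CC, swE_Hd, swE_Xm]
-- chunk 7: decomposition of symmetric restricted elements
lemma single_coeff {A : Type} [CommRing A] (x y a b : ℤ) (r : A) :
    (Finsupp.single ((x,y) : ℤ×ℤ) r) ((a,b) : ℤ×ℤ) = if (x = a ∧ y = b) then r else 0 := by
  rw [Finsupp.single_apply]
  refine if_congr ?_ rfl rfl
  constructor
  · intro h
    exact ⟨congrArg Prod.fst h, congrArg Prod.snd h⟩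
  · rintro ⟨h1, h2⟩
    rw [h1, h2]

lemma coeff_smul_msf (m : ℕ) (i j : Fin m) (r : Av m) (a b : ℤ) :
    Finsupp.applyAddHom ((a,b) : ℤ×ℤ) (r • msf (Av m) (i:ℤ) (j:ℤ)).coeff
      = (if ((i:ℤ) = a ∧ (j:ℤ) = b) then r else 0)
        + (if (i ≠ j ∧ (j:ℤ) = a ∧ (i:ℤ) = b) then r else 0) := by
  by_cases h : i = j
  · subst h
    rw [msf, if_pos rfl, Xm, AddMonoidAlgebra.smul_single', mul_one, AddMonoidAlgebra.coeff_single,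
      Finsupp.applyAddHom_apply, single_coeff]
    have hz : (if (i ≠ i ∧ ((i:ℤ) = a ∧ (i:ℤ) = b)) then r else 0) = 0 :=
      if_neg (fun hcon => hcon.1 rfl)
    rw [hz, add_zero]
  · have h2 : ¬ ((i:ℤ) = (j:ℤ)) := by
      intro hc
      exact h (Fin.ext (by exact_mod_cast hc))
    rw [msf, if_neg h2, Xm, Xm, smul_add, AddMonoidAlgebra.smul_single', AddMonoidAlgebra.smul_single',
      mul_one, AddMonoidAlgebra.coeff_add, AddMonoidAlgebra.coeff_single, AddMonoidAlgebra.coeff_single, map_add, Finsupp.applyAddHom_apply, Finsupp.applyAddHom_apply,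
      single_coeff, single_coeff]
    congr 1
    by_cases h3 : ((j:ℤ) = a ∧ (i:ℤ) = b)
    · rw [if_pos h3, if_pos ⟨h, h3⟩]
    · rw [if_neg h3, if_neg (fun hc => h3 hc.2)]

lemma decomp (m : ℕ) (p : Lau (Av m))
    (hsym : sw (Av m) p = p)
    (hb : ∀ ab ∈ p.coeff.support, 0 ≤ ab.1 ∧ ab.1 ≤ (m:ℤ)-2 ∧ 0 ≤ ab.2 ∧ ab.2 ≤ (m:ℤ)-2) :
    ∃ c : Fin m × Fin m → Av m,
      p = ∑ ij ∈ Finset.univ.filter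
            (fun ij : Fin m × Fin m => (ij.1 : ℕ) ≤ ij.2 ∧ (ij.2 : ℕ) + 2 ≤ m),
          c ij • msf (Av m) (ij.1 : ℤ) (ij.2 : ℤ) := by
  have hval : ∀ a b : ℤ, p.coeff (b,a) = p.coeff (a,b) := by
    intro a b
    conv_rhs => rw [← hsym]
    exact (Finsupp.equivMapDomain_apply (Equiv.prodComm ℤ ℤ) p.coeff ((a,b) : ℤ×ℤ)).symm
  set S : Finset (Fin m × Fin m) := Finset.univ.filter
      (fun ij : Fin m × Fin m => (ij.1 : ℕ) ≤ ij.2 ∧ (ij.2 : ℕ) + 2 ≤ m) with hS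
  set c : Fin m × Fin m → Av m := fun ij => p.coeff ((ij.1:ℤ), (ij.2:ℤ)) with hc
  refine ⟨c, ?_⟩
  have key : ∀ x : ℤ×ℤ, p.coeff x
      = (∑ ij ∈ S, c ij • msf (Av m) (ij.1:ℤ) (ij.2:ℤ) : Lau (Av m)).coeff x := by
    rintro ⟨a, b⟩
    have hrhs : (∑ ij ∈ S, c ij • msf (Av m) (ij.1:ℤ) (ij.2:ℤ) : Lau (Av m)).coeff (a,b)
        = ∑ ij ∈ S, ((if ((ij.1:ℤ) = a ∧ (ij.2:ℤ) = b) then c ij else 0)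
            + (if (ij.1 ≠ ij.2 ∧ (ij.2:ℤ) = a ∧ (ij.1:ℤ) = b) then c ij else 0)) := by
      rw [show (∑ ij ∈ S, c ij • msf (Av m) (ij.1:ℤ) (ij.2:ℤ) : Lau (Av m)).coeff (a,b)
        = Finsupp.applyAddHom ((a,b) : ℤ×ℤ)
            (∑ ij ∈ S, c ij • msf (Av m) (ij.1:ℤ) (ij.2:ℤ)).coeff from rfl]
      rw [AddMonoidAlgebra.coeff_sum, map_sum]
      exact Finset.sum_congr rfl fun ij _ => coeff_smul_msf m ij.1 ij.2 (c ij) a b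
    rw [hrhs]
    by_cases hin : 0 ≤ a ∧ a ≤ (m:ℤ)-2 ∧ 0 ≤ b ∧ b ≤ (m:ℤ)-2
    · obtain ⟨ha0, ha1, hb0, hb1⟩ := hin
      have ham : a.toNat < m := by omega
      have hbm : b.toNat < m := by omega
      set ia : Fin m := ⟨a.toNat, ham⟩ with hia
      set jb : Fin m := ⟨b.toNat, hbm⟩ with hjb
      have hia' : (ia:ℕ) = a.toNat := rfl
      have hjb' : (jb:ℕ) = b.toNat := rfl
      have hcia : ((ia:ℕ) : ℤ) = a := by omega
      have hcjb : ((jb:ℕ) : ℤ) = b := by omega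
      rcases lt_trichotomy a b with hab | hab | hab
      · rw [Finset.sum_eq_single_of_mem (ia, jb)
            (Finset.mem_filter.mpr ⟨Finset.mem_univ _,
              show (ia:ℕ) ≤ (jb:ℕ) ∧ (jb:ℕ)+2 ≤ m from ⟨by omega, by omega⟩⟩)
            ?_]
        · dsimp only
          rw [if_pos ⟨hcia, hcjb⟩, if_neg (by rintro ⟨-, h2, -⟩; omega), add_zero]
          show p.coeff ((a,b) : ℤ×ℤ) = p.coeff ((((ia:ℕ):ℤ), ((jb:ℕ):ℤ)) : ℤ×ℤ)
          rw [hcia, hcjb]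
        · rintro ⟨i, j⟩ hmem hne
          have hle : (i:ℕ) ≤ (j:ℕ) := ((Finset.mem_filter.mp hmem).2).1
          dsimp only
          rw [if_neg, if_neg, add_zero]
          · rintro ⟨-, h1, h2⟩
            omega
          · rintro ⟨h1, h2⟩
            exact hne (by rw [show i = ia from Fin.ext (by omega),
              show j = jb from Fin.ext (by omega)])
      · rw [Finset.sum_eq_single_of_mem (ia, jb)
            (Finset.mem_filter.mpr ⟨Finset.mem_univ _,
              show (ia:ℕ) ≤ (jb:ℕ) ∧ (jb:ℕ)+2 ≤ m from ⟨by omega, by omega⟩⟩)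
            ?_]
        · dsimp only
          rw [if_pos ⟨hcia, hcjb⟩, if_neg (by rintro ⟨hij, -, -⟩; exact hij (Fin.ext (by omega))),
            add_zero]
          show p.coeff ((a,b) : ℤ×ℤ) = p.coeff ((((ia:ℕ):ℤ), ((jb:ℕ):ℤ)) : ℤ×ℤ)
          rw [hcia, hcjb]
        · rintro ⟨i, j⟩ hmem hne
          dsimp only
          rw [if_neg, if_neg, add_zero]
          · rintro ⟨hij, h1, h2⟩
            exact hij (Fin.ext (by omega))
          · rintro ⟨h1, h2⟩
            exact hne (by rw [show i = ia from Fin.ext (by omega),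
              show j = jb from Fin.ext (by omega)])
      · rw [Finset.sum_eq_single_of_mem (jb, ia)
            (Finset.mem_filter.mpr ⟨Finset.mem_univ _,
              show (jb:ℕ) ≤ (ia:ℕ) ∧ (ia:ℕ)+2 ≤ m from ⟨by omega, by omega⟩⟩)
            ?_]
        · dsimp only
          rw [if_neg (by rintro ⟨h1, -⟩; omega),
            if_pos ⟨fun hcon => by
                have : (jb:ℕ) = (ia:ℕ) := congrArg Fin.val hcon
                omega,
              hcia, hcjb⟩, zero_add]
          show p.coeff ((a,b) : ℤ×ℤ) = p.coeff ((((jb:ℕ):ℤ), ((ia:ℕ):ℤ)) : ℤ×ℤ)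
          rw [hcjb, hcia]
          exact (hval a b).symm
        · rintro ⟨i, j⟩ hmem hne
          have hle : (i:ℕ) ≤ (j:ℕ) := ((Finset.mem_filter.mp hmem).2).1
          dsimp only
          rw [if_neg, if_neg, add_zero]
          · rintro ⟨hij, h1, h2⟩
            exact hne (by rw [show i = jb from Fin.ext (by omega),
              show j = ia from Fin.ext (by omega)])
          · rintro ⟨h1, h2⟩
            omega
    · have hp0 : p.coeff ((a,b) : ℤ×ℤ) = 0 := by
        by_contra hne
        have h3 := hb (a,b) (Finsupp.mem_support_iff.mpr hne)
        exact hin ⟨h3.1, h3.2.1, h3.2.2.1, h3.2.2.2⟩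
      rw [show p.coeff ((a,b):ℤ×ℤ) = p.coeff ((a,b) : ℤ×ℤ) from rfl, hp0]
      symm
      refine Finset.sum_eq_zero fun ij hmem => ?_
      obtain ⟨-, hle, hj2⟩ := Finset.mem_filter.mp hmem
      rw [if_neg, if_neg, add_zero]
      · rintro ⟨-, h1, h2⟩
        exact hin ⟨by omega, by omega, by omega, by omega⟩
      · rintro ⟨h1, h2⟩
        exact hin ⟨by omega, by omega, by omega, by omega⟩
  exact AddMonoidAlgebra.coeff_injective (Finsupp.ext key)
-- chunk 8: Wk = msf + bounded rest
def Res2 (m : ℕ) (p : Lau (Av m)) : Prop :=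
  ∀ ab ∈ p.coeff.support, 0 ≤ ab.1 ∧ ab.1 ≤ (m:ℤ)-2 ∧ 0 ≤ ab.2 ∧ ab.2 ≤ (m:ℤ)-2

lemma res2_zero (m : ℕ) : Res2 m 0 := by
  intro ab hab
  simp [Finsupp.support_zero] at hab

lemma res2_add (m : ℕ) {p q : Lau (Av m)} (hp : Res2 m p) (hq : Res2 m q) : Res2 m (p + q) := by
  intro ab hab
  rw [AddMonoidAlgebra.coeff_add] at hab
  rcases Finset.mem_union.mp (Finsupp.support_add hab) with h | h
  exacts [hp ab h, hq ab h]

lemma res2_neg (m : ℕ) {p : Lau (Av m)} (hp : Res2 m p) : Res2 m (-p) := by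
  intro ab hab
  exact hp ab (by rwa [AddMonoidAlgebra.coeff_neg, Finsupp.support_neg] at hab)

lemma res2_sub (m : ℕ) {p q : Lau (Av m)} (hp : Res2 m p) (hq : Res2 m q) : Res2 m (p - q) := by
  rw [sub_eq_add_neg]; exact res2_add m hp (res2_neg m hq)

lemma res2_single (m : ℕ) (a b : ℤ) (r : Av m) (h1 : 0 ≤ a) (h2 : a ≤ (m:ℤ)-2)
    (h3 : 0 ≤ b) (h4 : b ≤ (m:ℤ)-2) : Res2 m (AddMonoidAlgebra.single ((a,b) : ℤ×ℤ) r) := by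
  intro ab hab
  rw [AddMonoidAlgebra.coeff_single] at hab
  have := Finsupp.support_single_subset hab
  rw [Finset.mem_singleton] at this
  subst this
  exact ⟨h1, h2, h3, h4⟩

lemma res2_sum (m : ℕ) {ι : Type} (s : Finset ι) (f : ι → Lau (Av m))
    (h : ∀ i ∈ s, Res2 m (f i)) : Res2 m (∑ i ∈ s, f i) := by
  classical
  induction s using Finset.induction_on with
  | empty => simpa using res2_zero m
  | insert _ _ hnotmem ih =>
    rename_i a s'
    rw [Finset.sum_insert hnotmem]
    exact res2_add m (h a (Finset.mem_insert_self a s'))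
      (ih fun i hi => h i (Finset.mem_insert_of_mem hi))

lemma ev_zero (m : ℕ) : ev m 0 = 1 := by
  simp [ev]

lemma XCHd (m : ℕ) (a : ℤ) (r : Av m) (t : ℕ) :
    Xm (Av m) a a * (CC (Av m) r * Hd t)
      = ∑ l ∈ range t, AddMonoidAlgebra.single ((a+l, a+(t:ℤ)-1-l) : ℤ×ℤ) r := by
  rw [Hd, Finset.mul_sum, Finset.mul_sum]
  refine Finset.sum_congr rfl fun l _ => ?_
  rw [CC_eq, Xm, Xm]
  rw [AddMonoidAlgebra.single_mul_single, AddMonoidAlgebra.single_mul_single]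
  congr 1
  · show ((a,a) : ℤ×ℤ) + ((0,0) + ((l:ℤ), (t:ℤ)-1-l)) = (a+l, a+(t:ℤ)-1-l)
    rw [Prod.mk_add_mk, Prod.mk_add_mk, Prod.mk.injEq]
    constructor <;> ring
  · ring

lemma res2_XCHd (m : ℕ) (a : ℤ) (r : Av m) (t : ℕ) (h0 : 0 ≤ a) (ht : a + t ≤ (m:ℤ) - 1) :
    Res2 m (Xm (Av m) a a * (CC (Av m) r * Hd t)) := by
  rw [XCHd]
  refine res2_sum m _ _ fun l hl => ?_
  have hlt : l < t := Finset.mem_range.mp hl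
  refine res2_single m _ _ _ (by omega) (by omega) (by omega) (by omega)

def Mid (m k : ℕ) : Lau (Av m) :=
  ∑ l ∈ range (m-k-2), AddMonoidAlgebra.single (((k:ℤ)+l+1, (m:ℤ)-2-l) : ℤ×ℤ) (1 : Av m)

lemma res2_Mid (m k : ℕ) (hk : k < m) : Res2 m (Mid m k) := by
  refine res2_sum m _ _ fun l hl => ?_
  have hlt : l < m-k-2 := Finset.mem_range.mp hl
  refine res2_single m _ _ _ (by omega) (by omega) (by omega) (by omega)

lemma E0_eq (m k : ℕ) (hk : k < m) :
    Xm (Av m) k k * Hd (m-k) = msf (Av m) (k:ℤ) ((m:ℤ)-1) + Mid m k := by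
  have h1 : Xm (Av m) (k:ℤ) (k:ℤ) * Hd (m-k)
      = ∑ l ∈ range (m-k), AddMonoidAlgebra.single (((k:ℤ)+l, (k:ℤ)+((m-k:ℕ):ℤ)-1-l) : ℤ×ℤ) (1 : Av m) := by
    have := XCHd m (k:ℤ) (1 : Av m) (m-k)
    rw [CC_one, one_mul] at this
    exact this
  rcases Nat.lt_or_ge k (m-1) with hkm | hkm
  · -- k < m-1
    obtain ⟨n, hn⟩ : ∃ n, m - k = n + 2 := ⟨m-k-2, by omega⟩
    have hm' : m = k + n + 2 := by omega
    rw [h1, msf, if_neg (by omega), Mid, hn, show n+2-2 = n from by omega]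
    rw [Finset.sum_range_succ, Finset.sum_range_succ']
    have e1 : AddMonoidAlgebra.single (((k:ℤ)+((n+1:ℕ):ℤ), (k:ℤ)+((n+2:ℕ):ℤ)-1-((n+1:ℕ):ℤ)) : ℤ×ℤ) (1 : Av m)
        = Xm (Av m) ((m:ℤ)-1) (k:ℤ) := by
      rw [Xm]
      congr 1
      rw [Prod.mk.injEq]
      constructor <;> push_cast <;> omega
    have e2 : AddMonoidAlgebra.single (((k:ℤ)+((0:ℕ):ℤ), (k:ℤ)+((n+2:ℕ):ℤ)-1-((0:ℕ):ℤ)) : ℤ×ℤ) (1 : Av m)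
        = Xm (Av m) (k:ℤ) ((m:ℤ)-1) := by
      rw [Xm]
      congr 1
      rw [Prod.mk.injEq]
      constructor <;> push_cast <;> omega
    have e3 : ∀ l ∈ range n,
        AddMonoidAlgebra.single (((k:ℤ)+((l+1:ℕ):ℤ), (k:ℤ)+((n+2:ℕ):ℤ)-1-((l+1:ℕ):ℤ)) : ℤ×ℤ) (1 : Av m)
          = AddMonoidAlgebra.single (((k:ℤ)+(l:ℤ)+1, (m:ℤ)-2-(l:ℤ)) : ℤ×ℤ) (1 : Av m) := by
      intro l hl
      congr 1
      rw [Prod.mk.injEq]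
      constructor <;> push_cast <;> omega
    rw [e1, e2, Finset.sum_congr rfl e3]
    abel
  · -- k = m-1
    have hkeq : k = m - 1 := by omega
    have ht1 : m - k = 1 := by omega
    rw [h1, ht1]
    rw [msf, if_pos (by omega), Mid, show m-k-2 = 0 from by omega]
    rw [Finset.sum_range_one, Finset.sum_range_zero, add_zero, Xm]
    congr 1
    rw [Prod.mk.injEq]
    constructor <;> push_cast <;> omega
-- chunk 9: Wk shape and part 2
lemma swE_msf (m k : ℕ) :
    swE (Av m) (msf (Av m) (k:ℤ) ((m:ℤ)-1)) = msf (Av m) (k:ℤ) ((m:ℤ)-1) := by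
  by_cases h : (k:ℤ) = (m:ℤ)-1
  · rw [msf, if_pos h, swE_Xm]
  · rw [msf, if_neg h, map_add, swE_Xm, swE_Xm, add_comm]

lemma Wk_shape (m k : ℕ) (hm : 1 ≤ m) (hk : k < m) :
    ∃ c : Fin m × Fin m → Av m,
      Wk m k = msf (Av m) (k:ℤ) ((m:ℤ)-1) +
        ∑ ij ∈ Finset.univ.filter
            (fun ij : Fin m × Fin m => (ij.1 : ℕ) ≤ ij.2 ∧ (ij.2 : ℕ) + 2 ≤ m),
          c ij • msf (Av m) (ij.1 : ℤ) (ij.2 : ℤ) := by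
  obtain ⟨r, hr⟩ : ∃ r, m - k = r + 1 := ⟨m-k-1, by omega⟩
  have hWk : Wk m k = Xm (Av m) (k:ℤ) (k:ℤ) * Hd (m-k)
      + (∑ i ∈ range r, Xm (Av m) (k:ℤ) (k:ℤ) *
          (CC (Av m) ((-1:Av m)^(i+1) * ev m (i+1)) * Hd (r+1-(i+1))))
      - (∑ i ∈ range k, CC (Av m) ((-1:Av m)^(m-i) * ev m (m-i)) *
          (Xm (Av m) (i:ℤ) (i:ℤ) * Hd (k-i))) := by
    rw [Wk, hr, Finset.sum_range_succ']
    rw [show ((-1:Av m))^0 * ev m 0 = 1 from by rw [pow_zero, ev_zero, one_mul], CC_one, one_mul]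
    rw [show r + 1 - 0 = r + 1 from rfl, mul_add, Finset.mul_sum, ← hr]
    ring
  have hRest : Wk m k - msf (Av m) (k:ℤ) ((m:ℤ)-1)
      = Mid m k
        + (∑ i ∈ range r, Xm (Av m) (k:ℤ) (k:ℤ) *
            (CC (Av m) ((-1:Av m)^(i+1) * ev m (i+1)) * Hd (r+1-(i+1))))
        - (∑ i ∈ range k, CC (Av m) ((-1:Av m)^(m-i) * ev m (m-i)) *
            (Xm (Av m) (i:ℤ) (i:ℤ) * Hd (k-i))) := by
    rw [hWk, E0_eq m k hk]
    ring
  have hres2 : Res2 m (Wk m k - msf (Av m) (k:ℤ) ((m:ℤ)-1)) := by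
    rw [hRest]
    refine res2_sub m (res2_add m (res2_Mid m k hk) ?_) ?_
    · refine res2_sum m _ _ fun i hi => ?_
      have hir : i < r := Finset.mem_range.mp hi
      refine res2_XCHd m _ _ _ (by positivity) ?_
      have : ((r+1-(i+1) : ℕ) : ℤ) ≤ (r : ℤ) - i := by push_cast; omega
      have hkr : (k:ℤ) + ((r : ℤ) - i) ≤ (m:ℤ) - 1 := by omega
      omega
    · refine res2_sum m _ _ fun i hi => ?_
      have hik : i < k := Finset.mem_range.mp hi
      have hcomm : CC (Av m) ((-1:Av m)^(m-i) * ev m (m-i)) *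
            (Xm (Av m) (i:ℤ) (i:ℤ) * Hd (k-i))
          = Xm (Av m) (i:ℤ) (i:ℤ) *
            (CC (Av m) ((-1:Av m)^(m-i) * ev m (m-i)) * Hd (k-i)) := by ring
      rw [hcomm]
      refine res2_XCHd m _ _ _ (by positivity) (by push_cast; omega)
  have hsym : sw (Av m) (Wk m k - msf (Av m) (k:ℤ) ((m:ℤ)-1))
      = Wk m k - msf (Av m) (k:ℤ) ((m:ℤ)-1) := by
    rw [sw_eq_swE, map_sub, swE_Wk, swE_msf]
  obtain ⟨c, hc⟩ := decomp m _ hsym hres2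
  exact ⟨c, by rw [← hc]; ring⟩
-- chunk 10: evaluations
abbrev DN (m : ℕ) : Type := TrivSqZeroExt (Av m) (Av m)

open TrivSqZeroExt in
lemma single_unit_spec (m : ℕ) (x : ℤ × (Fin m → ℤ)) :
    (AddMonoidAlgebra.single x (1:ℤ) : Av m) * AddMonoidAlgebra.single (-x) 1 = 1 := by
  rw [AddMonoidAlgebra.single_mul_single, add_neg_cancel, one_mul]
  rfl

def uv (m : ℕ) (i : Fin m) : (Av m)ˣ :=
  ⟨vv m i, AddMonoidAlgebra.single (0, -Pi.single i 1) 1,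
    by rw [vv, show ((0:ℤ), -Pi.single i 1) = -((0:ℤ), Pi.single i (1:ℤ)) from by simp,
      single_unit_spec],
    by rw [vv, show ((0:ℤ), -Pi.single i 1) = -((0:ℤ), Pi.single i (1:ℤ)) from by simp,
      mul_comm, single_unit_spec]⟩

lemma uv_val (m : ℕ) (i : Fin m) : ((uv m i : (Av m)ˣ) : Av m) = vv m i := rfl

lemma hvw (m : ℕ) (i : Fin m) : vv m i * (((uv m i)⁻¹ : (Av m)ˣ) : Av m) = 1 :=
  Units.mul_inv (uv m i)

open TrivSqZeroExt in
lemma tu_spec1 (m : ℕ) (i : Fin m) :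
    (inl (vv m i) + inr (vv m i) : DN m) *
      (inl (((uv m i)⁻¹ : (Av m)ˣ) : Av m) - inr (((uv m i)⁻¹ : (Av m)ˣ) : Av m)) = 1 := by
  apply TrivSqZeroExt.ext
  · simp [TrivSqZeroExt.fst_mul, hvw]
  · simp [TrivSqZeroExt.snd_mul, hvw, MulOpposite.smul_eq_mul_unop]

open TrivSqZeroExt in
def tu (m : ℕ) (i : Fin m) : (DN m)ˣ :=
  ⟨inl (vv m i) + inr (vv m i),
    inl (((uv m i)⁻¹ : (Av m)ˣ) : Av m) - inr (((uv m i)⁻¹ : (Av m)ˣ) : Av m),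
    tu_spec1 m i, by rw [mul_comm]; exact tu_spec1 m i⟩

open TrivSqZeroExt in
def su (m : ℕ) (i : Fin m) : (DN m)ˣ :=
  ⟨inl (vv m i), inl (((uv m i)⁻¹ : (Av m)ˣ) : Av m),
    by rw [inl_mul_inl, hvw, inl_one],
    by rw [inl_mul_inl, mul_comm, hvw, inl_one]⟩

def phiU (m : ℕ) (i : Fin m) : Multiplicative (ℤ×ℤ) →* (DN m)ˣ :=
  MonoidHom.mk' (fun g => tu m i ^ (g.toAdd.1) * su m i ^ (g.toAdd.2))
    (by
      intro a b
      show tu m i ^ (a.toAdd.1 + b.toAdd.1) * su m i ^ (a.toAdd.2 + b.toAdd.2) = _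
      rw [zpow_add, zpow_add]
      exact mul_mul_mul_comm (tu m i ^ a.toAdd.1) (tu m i ^ b.toAdd.1) (su m i ^ a.toAdd.2) (su m i ^ b.toAdd.2))

def Theta (m : ℕ) (i : Fin m) : Lau (Av m) →ₐ[Av m] DN m :=
  AddMonoidAlgebra.lift (Av m) (DN m) (ℤ×ℤ) ((Units.coeHom (DN m)).comp (phiU m i))

def psi (m : ℕ) (i : Fin m) : Lau (Av m) →ₐ[Av m] Av m :=
  (TrivSqZeroExt.fstHom (Av m) (Av m) (Av m)).comp (Theta m i)

example (m : ℕ) : CommRing (DN m) := inferInstance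
-- chunk 11: Theta/psi computations
open TrivSqZeroExt

lemma Theta_single (m : ℕ) (i : Fin m) (x : ℤ×ℤ) (r : Av m) :
    Theta m i (AddMonoidAlgebra.single x r)
      = r • ((tu m i ^ x.1 * su m i ^ x.2 : (DN m)ˣ) : DN m) := by
  rw [Theta, AddMonoidAlgebra.lift_single]
  rfl

lemma Theta_X1 (m : ℕ) (i : Fin m) :
    Theta m i (Xm (Av m) 1 0) = inl (vv m i) + inr (vv m i) := by
  rw [Xm, Theta_single]
  show (1 : Av m) • ((tu m i ^ (1:ℤ) * su m i ^ (0:ℤ) : (DN m)ˣ) : DN m) = _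
  rw [zpow_one, zpow_zero, mul_one, one_smul]
  rfl

lemma Theta_X2 (m : ℕ) (i : Fin m) :
    Theta m i (Xm (Av m) 0 1) = inl (vv m i) := by
  rw [Xm, Theta_single]
  show (1 : Av m) • ((tu m i ^ (0:ℤ) * su m i ^ (1:ℤ) : (DN m)ˣ) : DN m) = _
  rw [zpow_one, zpow_zero, one_mul, one_smul]
  rfl

lemma Theta_CC (m : ℕ) (i : Fin m) (r : Av m) : Theta m i (CC (Av m) r) = inl r := by
  rw [CC, AlgHom.commutes]
  exact congrFun (algebraMap_eq_inl (R' := Av m) (M := Av m)) r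

lemma inr_mul_eq (m : ℕ) (x : Av m) (y : DN m) : (inr x : DN m) * y = inr (x * fst y) := by
  apply TrivSqZeroExt.ext
  · simp [fst_mul]
  · simp [snd_mul, op_smul_eq_mul, mul_comm]

def Dv (m : ℕ) (i : Fin m) : Av m := ∏ l ∈ Finset.univ.erase i, (vv m i - vv m l)

lemma Theta_fv1 (m : ℕ) (i : Fin m) :
    Theta m i (fv1 m) = inr (vv m i * Dv m i) := by
  rw [fv1, map_prod]
  have hterm : ∀ l : Fin m, Theta m i (Xm (Av m) 1 0 - CC (Av m) (vv m l))
      = inl (vv m i - vv m l) + inr (vv m i) := by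
    intro l
    rw [map_sub, Theta_X1, Theta_CC]
    apply TrivSqZeroExt.ext <;> simp
  rw [Finset.prod_congr rfl (fun l _ => hterm l)]
  rw [← Finset.mul_prod_erase Finset.univ _ (Finset.mem_univ i)]
  rw [show inl (vv m i - vv m i) + inr (vv m i) = (inr (vv m i) : DN m) from by simp]
  rw [inr_mul_eq]
  congr 1
  congr 1
  have hf : fst (∏ x ∈ Finset.univ.erase i, ((inl (vv m i - vv m x) + inr (vv m i)) : DN m))
      = ∏ x ∈ Finset.univ.erase i, fst ((inl (vv m i - vv m x) + inr (vv m i)) : DN m) :=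
    map_prod (TrivSqZeroExt.fstHom (Av m) (Av m) (Av m)) _ _
  rw [hf, Dv]
  exact Finset.prod_congr rfl fun l _ => by simp

lemma Theta_fv2 (m : ℕ) (i : Fin m) : Theta m i (fv2 m) = 0 := by
  rw [fv2, map_prod]
  refine Finset.prod_eq_zero (Finset.mem_univ i) ?_
  rw [map_sub, Theta_X2, Theta_CC, sub_self]
-- chunk 12: psi values and quotient lift
lemma psi_eq_fst (m : ℕ) (i : Fin m) (x : Lau (Av m)) :
    psi m i x = fst (Theta m i x) := rfl

lemma psi_fv1 (m : ℕ) (i : Fin m) : psi m i (fv1 m) = 0 := by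
  rw [psi_eq_fst, Theta_fv1]; simp

lemma psi_fv2 (m : ℕ) (i : Fin m) : psi m i (fv2 m) = 0 := by
  rw [psi_eq_fst, Theta_fv2]; simp

lemma vv_ne_zero (m : ℕ) (i : Fin m) : vv m i ≠ 0 := by
  rw [vv]
  intro h
  exact one_ne_zero (AddMonoidAlgebra.single_eq_zero.mp h)

lemma vv_sub_ne_zero (m : ℕ) {i l : Fin m} (h : i ≠ l) : vv m i - vv m l ≠ 0 := by
  rw [sub_ne_zero, vv, vv]
  intro hc
  rcases AddMonoidAlgebra.single_inj.mp hc with ⟨h1, -⟩ | ⟨h1, -⟩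
  · have h2 : Pi.single (M := fun _ : Fin m => ℤ) i 1 = Pi.single l 1 :=
      congrArg Prod.snd h1
    have h3 := congrFun h2 i
    simp [Pi.single_apply, h] at h3
  · exact one_ne_zero h1

lemma Dv_ne_zero (m : ℕ) (i : Fin m) : Dv m i ≠ 0 := by
  rw [Dv]
  rw [Finset.prod_ne_zero_iff]
  intro l hl
  exact vv_sub_ne_zero m (fun hc => (Finset.mem_erase.mp hl).1 hc.symm)

lemma psi_zel (m : ℕ) (i : Fin m) (hm : 1 ≤ m) :
    psi m i (zel m) = vv m i * Dv m i := by
  have h := congrArg (Theta m i) (idB m hm)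
  rw [map_mul, map_sub, Theta_X1, Theta_X2, map_sub, map_mul, map_mul,
    Theta_X1, Theta_X2, Theta_fv1, Theta_fv2, mul_zero, sub_zero] at h
  rw [show (inl (vv m i) + inr (vv m i) - inl (vv m i) : DN m) = inr (vv m i) from by ring] at h
  rw [inr_mul_eq, TrivSqZeroExt.inl_mul_inr, smul_eq_mul] at h
  have h2 := inr_injective h
  have h3 : vv m i * (fst (Theta m i (zel m)) - vv m i * Dv m i) = 0 := by
    rw [mul_sub, h2]; ring
  rcases mul_eq_zero.mp h3 with h4 | h4
  · exact absurd h4 (vv_ne_zero m i)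
  · rw [psi_eq_fst]
    exact sub_eq_zero.mp h4

lemma psi_Xm10 (m : ℕ) (i : Fin m) : psi m i (Xm (Av m) 1 0) = vv m i := by
  rw [psi_eq_fst, Theta_X1]; simp

lemma psi_Xk0 (m : ℕ) (i : Fin m) (k : ℕ) :
    psi m i (Xm (Av m) (k:ℤ) 0) = vv m i ^ k := by
  rw [← Xm_pow, map_pow, psi_Xm10]

lemma psi_Xkm1_mul (m : ℕ) (i : Fin m) (k : ℕ) :
    psi m i (Xm (Av m) ((k:ℤ)-1) 0) * vv m i = vv m i ^ k := by
  rw [← psi_Xm10 m i, ← map_mul, Xm_mul_s13,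
    show ((k:ℤ)-1+1) = (k:ℤ) from by ring, show ((0:ℤ)+0) = (0:ℤ) from by ring,
    psi_Xm10, psi_Xk0]

def psiQ (m : ℕ) (i : Fin m) : Rmq m →ₐ[Av m] Av m :=
  Ideal.Quotient.liftₐ _ (psi m i) (by
    intro a ha
    obtain ⟨x, y, hxy⟩ := Ideal.mem_span_pair.mp ha
    rw [← hxy, map_add, map_mul, map_mul, psi_fv1, psi_fv2, mul_zero, mul_zero, add_zero])

lemma psiQ_pr (m : ℕ) (i : Fin m) (x : Lau (Av m)) : psiQ m i (pr m x) = psi m i x := rfl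

/- STATEMENT 13: the elements X₁^{k-1} z, 0 ≤ k ≤ m-1, of R_m are linearly
independent over A; more precisely, writing X₁^{k-1} z in the basis of
restricted monomial symmetric functions m_{ij}, the coefficient of m_{j(m-1)}
is δ_{jk}. -/
theorem stmt13 (m : ℕ) (hm : 1 ≤ m) :
    LinearIndependent (Av m)
      (fun k : Fin m => pr m (Xm (Av m) ((k : ℤ) - 1) 0 * zel m)) ∧
    ∀ k : Fin m, ∃ c : Fin m × Fin m → Av m,
      pr m (Xm (Av m) ((k : ℤ) - 1) 0 * zel m) =
        pr m (msf (Av m) (k : ℤ) ((m : ℤ) - 1) +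
          ∑ ij ∈ Finset.univ.filter
              (fun ij : Fin m × Fin m => (ij.1 : ℕ) ≤ ij.2 ∧ (ij.2 : ℕ) + 2 ≤ m),
            c ij • msf (Av m) (ij.1 : ℤ) (ij.2 : ℤ)) := by
  constructor
  · rw [Fintype.linearIndependent_iff]
    intro g hg
    have hsum : ∀ i : Fin m, (∑ k : Fin m, g k * vv m i ^ (k:ℕ)) = 0 := by
      intro i
      have h0 := congrArg (psiQ m i) hg
      rw [map_sum, map_zero] at h0
      have hterm : ∀ k : Fin m,
          psiQ m i (g k • pr m (Xm (Av m) ((k : ℤ) - 1) 0 * zel m))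
            = g k * (vv m i ^ (k:ℕ) * Dv m i) := by
        intro k
        rw [map_smul, psiQ_pr, map_mul, psi_zel m i hm, smul_eq_mul]
        congr 1
        rw [← mul_assoc, psi_Xkm1_mul m i (k:ℕ)]
      rw [Finset.sum_congr rfl (fun k _ => hterm k)] at h0
      have h1 : (∑ k : Fin m, g k * vv m i ^ (k:ℕ)) * Dv m i = 0 := by
        rw [Finset.sum_mul, ← h0]
        exact Finset.sum_congr rfl fun k _ => by ring
      rcases mul_eq_zero.mp h1 with h2 | h2
      · exact h2
      · exact absurd h2 (Dv_ne_zero m i)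
    set M : Matrix (Fin m) (Fin m) (Av m) := Matrix.vandermonde (fun i : Fin m => vv m i)
      with hMdef
    have hM : M.mulVec g = 0 := by
      funext i
      show ∑ k : Fin m, M i k * g k = 0
      rw [← hsum i]
      exact Finset.sum_congr rfl fun k _ => by
        rw [hMdef, Matrix.vandermonde]
        exact mul_comm _ _
    have hdg : ∀ k : Fin m, M.det * g k = 0 := by
      have h3 : M.adjugate.mulVec (M.mulVec g) = M.det • g := by
        rw [Matrix.mulVec_mulVec, Matrix.adjugate_mul, Matrix.smul_mulVec,
          Matrix.one_mulVec]
      rw [hM, Matrix.mulVec_zero] at h3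
      intro k
      have h4 := congrFun h3.symm k
      rwa [Pi.smul_apply, smul_eq_mul, Pi.zero_apply] at h4
    have hdet : M.det ≠ 0 := by
      rw [hMdef, Matrix.det_vandermonde]
      rw [Finset.prod_ne_zero_iff]
      intro i _
      rw [Finset.prod_ne_zero_iff]
      intro j hj
      have hij : i < j := Finset.mem_Ioi.mp hj
      exact vv_sub_ne_zero m (ne_of_gt hij)
    intro k
    rcases mul_eq_zero.mp (hdg k) with h | h
    · exact absurd h hdet
    · exact h
  · intro k
    obtain ⟨c, hc⟩ := Wk_shape m (k:ℕ) hm k.isLt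
    refine ⟨c, ?_⟩
    rw [pr_eq_Wk m (k:ℕ) hm k.isLt, hc]
end
end
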